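/- arXiv:1602.00976 — 3 statements merged into one kernel-verified Lean document; each statement's English description precedes it below -/
import Mathlib

section
/- Suppose condition (I¹_ρ) holds for some ρ > 0: there exists a finite positive Borel measure dA^ρ on [0,1], with α^ρ[u] := ∫₀¹ u(t) dA^ρ(t) and 𝒦^ρ(s) := ∫₀¹ k(t,s) dA^ρ(t), such that α^ρ[γ] < 1, H[u] ≤ α^ρ[u] for every u ∈ K with ‖u‖ = ρ, and f^{cρ,ρ} · sup_{t∈[0,1]} { γ(t)/(1−α^ρ[γ]) · ∫₀¹ 𝒦^ρ(s) g(s) ds + ∫₀¹ k(t,s) g(s) ds } < 1, where f^{cρ,ρ} := ess sup { f(t,u)/ρ : 0 ≤ t ≤ 1, cρ ≤ u ≤ ρ }. Then for every u ∈ K with ‖u‖ = ρ and every real μ ≥ 1 one has μ·u ≠ Tu. -/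
open MeasureTheory Set

/-- Supremum norm of `u` on `[0,1]`. -/
noncomputable def nrm (u : ℝ → ℝ) : ℝ := sSup ((fun t => |u t|) '' Icc (0:ℝ) 1)

/-- Minimum (infimum) of `u` on `[a,b]`. -/
noncomputable def minOnIcc (u : ℝ → ℝ) (a b : ℝ) : ℝ := sInf (u '' Icc a b)

/-- The perturbed Hammerstein operator `Tu(t) = γ(t)H[u] + ∫₀¹ k(t,s)g(s)f(s,u(s)) ds`. -/
noncomputable def Tham (k : ℝ → ℝ → ℝ) (g : ℝ → ℝ) (f : ℝ → ℝ → ℝ) (γ : ℝ → ℝ)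
    (H : (ℝ → ℝ) → ℝ) (u : ℝ → ℝ) (t : ℝ) : ℝ :=
  γ t * H u + ∫ s in (0:ℝ)..1, k t s * g s * f s (u s)

/-- Condition (I¹_ρ) for strongly positive kernels. -/
def CondI1 (k : ℝ → ℝ → ℝ) (g : ℝ → ℝ) (f : ℝ → ℝ → ℝ) (γ : ℝ → ℝ)
    (H : (ℝ → ℝ) → ℝ) (K : Set (ℝ → ℝ)) (c ρ : ℝ) : Prop :=
  ∃ μA : Measure ℝ, IsFiniteMeasure μA ∧ μA ((Icc (0:ℝ) 1)ᶜ) = 0 ∧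
    (∫ t, γ t ∂μA) < 1 ∧
    (∀ u ∈ K, nrm u = ρ → H u ≤ ∫ t, u t ∂μA) ∧
    ∃ fb : ℝ,
      (∀ᵐ t ∂(volume.restrict (Icc (0:ℝ) 1)), ∀ u : ℝ, c * ρ ≤ u → u ≤ ρ → f t u ≤ fb * ρ) ∧
      fb * sSup ((fun t => γ t / (1 - ∫ t', γ t' ∂μA) *
          (∫ s in (0:ℝ)..1, (∫ t', k t' s ∂μA) * g s) +
          ∫ s in (0:ℝ)..1, k t s * g s) '' Icc (0:ℝ) 1) < 1

/-- Carathéodory composition: if `f` is measurable in the first variable and a.e. continuous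
in the second (on `Ici 0`), and `v` is continuous nonnegative, then `s ↦ f s (v s)` is
a.e. measurable. -/
lemma carath_aemeas (f : ℝ → ℝ → ℝ) (hf_meas : ∀ u : ℝ, Measurable fun t => f t u)
    (hf_cont : ∀ᵐ t ∂(volume.restrict (Icc (0:ℝ) 1)), ContinuousOn (f t) (Ici 0))
    (v : ℝ → ℝ) (hv : Continuous v) (hv0 : ∀ s, 0 ≤ v s) :
    AEMeasurable (fun s => f s (v s)) (volume.restrict (Icc (0:ℝ) 1)) := by
  have hFn : ∀ n : ℕ, Measurable
      (fun s : ℝ => f s (v (((⌈(n+1 : ℝ) * s⌉ : ℤ) : ℝ) / (n+1 : ℝ)))) := by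
    intro n
    have h1 : Measurable (fun s : ℝ => ((s, ⌈(n+1:ℝ) * s⌉) : ℝ × ℤ)) :=
      measurable_id.prodMk (Int.measurable_ceil.comp (measurable_id.const_mul _))
    have h2 : Measurable (fun p : ℝ × ℤ => f p.1 (v ((p.2 : ℝ)/(n+1:ℝ)))) :=
      measurable_from_prod_countable_left (fun j => by
        simpa using hf_meas (v ((j : ℝ)/(n+1:ℝ))))
    exact h2.comp h1
  apply aemeasurable_of_tendsto_metrizable_ae Filter.atTop (fun n => (hFn n).aemeasurable)
  filter_upwards [hf_cont] with s hs
  have harg : Filter.Tendsto (fun n : ℕ => ((⌈(n+1:ℝ) * s⌉ : ℤ) : ℝ) / (n+1:ℝ))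
      Filter.atTop (nhds s) := by
    have hub : Filter.Tendsto (fun n : ℕ => s + 1/(n+1:ℝ)) Filter.atTop (nhds s) := by
      have := tendsto_one_div_add_atTop_nhds_zero_nat (𝕜 := ℝ)
      have h := Filter.Tendsto.add (tendsto_const_nhds (x := s)) this
      simpa using h
    refine tendsto_of_tendsto_of_tendsto_of_le_of_le tendsto_const_nhds hub ?_ ?_
    · intro n
      have hpos : (0:ℝ) < (n+1:ℝ) := by positivity
      show s ≤ ((⌈(n+1:ℝ) * s⌉ : ℤ) : ℝ) / (n+1:ℝ)
      rw [le_div_iff₀ hpos]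
      have := Int.le_ceil ((n+1:ℝ) * s)
      linarith [this]
    · intro n
      have hpos : (0:ℝ) < (n+1:ℝ) := by positivity
      show ((⌈(n+1:ℝ) * s⌉ : ℤ) : ℝ) / (n+1:ℝ) ≤ s + 1/(n+1:ℝ)
      rw [div_le_iff₀ hpos]
      have h1 := (Int.ceil_lt_add_one ((n+1:ℝ) * s)).le
      have h2 : (1/(n+1:ℝ)) * (n+1:ℝ) = 1 := by field_simp
      nlinarith
  have hvt : Filter.Tendsto (fun n : ℕ => v (((⌈(n+1:ℝ) * s⌉ : ℤ) : ℝ) / (n+1:ℝ)))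
      Filter.atTop (nhds (v s)) := (hv.tendsto s).comp harg
  have hvt' : Filter.Tendsto (fun n : ℕ => v (((⌈(n+1:ℝ) * s⌉ : ℤ) : ℝ) / (n+1:ℝ)))
      Filter.atTop (nhdsWithin (v s) (Ici 0)) :=
    tendsto_nhdsWithin_of_tendsto_nhds_of_eventually_within _ hvt
      (Filter.Eventually.of_forall fun n => hv0 _)
  exact ((hs (v s) (hv0 s)).tendsto).comp hvt'

set_option maxHeartbeats 1000000 in
theorem stmt0
    (k : ℝ → ℝ → ℝ) (g : ℝ → ℝ) (f : ℝ → ℝ → ℝ) (Φ γ : ℝ → ℝ) (c₁ c₂ c : ℝ)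
    (H : (ℝ → ℝ) → ℝ) (K : Set (ℝ → ℝ))
    (hk_meas : Measurable (Function.uncurry k))
    (hk_pos : ∀ t ∈ Icc (0:ℝ) 1, ∀ s ∈ Icc (0:ℝ) 1, 0 < k t s)
    (hk_cont : ∀ τ ∈ Icc (0:ℝ) 1, ∀ᵐ s ∂(volume.restrict (Icc (0:ℝ) 1)),
      Filter.Tendsto (fun t => |k t s - k τ s|) (nhdsWithin τ (Icc (0:ℝ) 1)) (nhds 0))
    (hΦ_meas : Measurable Φ)
    (hΦ_bdd : ∃ C, ∀ᵐ s ∂(volume.restrict (Icc (0:ℝ) 1)), |Φ s| ≤ C)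
    (hc₁ : c₁ ∈ Ioc (0:ℝ) 1)
    (hkΦ : ∀ t ∈ Icc (0:ℝ) 1, ∀ᵐ s ∂(volume.restrict (Icc (0:ℝ) 1)),
      c₁ * Φ s ≤ k t s ∧ k t s ≤ Φ s)
    (hg_meas : Measurable g)
    (hg_nonneg : ∀ᵐ s ∂(volume.restrict (Icc (0:ℝ) 1)), 0 ≤ g s)
    (hgΦ_int : IntegrableOn (fun s => g s * Φ s) (Icc (0:ℝ) 1))
    (hΦg_pos : 0 < ∫ s in (0:ℝ)..1, Φ s * g s)
    (hf_meas : ∀ u : ℝ, Measurable (fun t => f t u))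
    (hf_cont : ∀ᵐ t ∂(volume.restrict (Icc (0:ℝ) 1)), ContinuousOn (f t) (Ici 0))
    (hf_nonneg : ∀ t u : ℝ, 0 ≤ u → 0 ≤ f t u)
    (hf_bdd : ∀ r > 0, ∃ C, ∀ᵐ t ∂(volume.restrict (Icc (0:ℝ) 1)), ∀ u ∈ Icc (0:ℝ) r, f t u ≤ C)
    (hγ_cont : ContinuousOn γ (Icc (0:ℝ) 1))
    (hc₂ : c₂ ∈ Ioc (0:ℝ) 1)
    (hγ_low : ∀ t ∈ Icc (0:ℝ) 1, c₂ * nrm γ ≤ γ t)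
    (hc : c = min c₁ c₂)
    (hK : K = {u : ℝ → ℝ | ContinuousOn u (Icc (0:ℝ) 1) ∧ c * nrm u ≤ minOnIcc u 0 1})
    (hH_nonneg : ∀ u ∈ K, 0 ≤ H u)
    (hH_cont : ∀ u ∈ K, ∀ ε > 0, ∃ δ > 0, ∀ v ∈ K,
      nrm (fun t => u t - v t) < δ → |H u - H v| < ε)
    (hH_bdd : ∀ M : ℝ, ∃ M', ∀ u ∈ K, nrm u ≤ M → H u ≤ M')
    (ρ : ℝ) (hρ : 0 < ρ) (hI1 : CondI1 k g f γ H K c ρ) :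
    ∀ u ∈ K, nrm u = ρ → ∀ μ : ℝ, 1 ≤ μ →
      ¬ (∀ t ∈ Icc (0:ℝ) 1, μ * u t = Tham k g f γ H u t) := by
  obtain ⟨μA, hfin, hAcc, hαγ, hHle, fb, hfb, hfbS⟩ := hI1
  haveI := hfin
  intro u huK hnu μ hμ heq
  -- basic constants
  have hc0 : 0 < c := hc ▸ lt_min hc₁.1 hc₂.1
  have hc1' : c ≤ 1 := hc ▸ (min_le_left c₁ c₂).trans hc₁.2
  have hcρρ : c * ρ ≤ ρ := by nlinarith
  -- membership in K
  have hu' := huK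
  rw [hK] at hu'
  obtain ⟨hu_cont, hu_min⟩ := hu'
  -- clamp and the continuous extension of u
  set clamp : ℝ → ℝ := fun s => max 0 (min 1 s) with hclamp_def
  have hclamp_cont : Continuous clamp := by
    exact continuous_const.max (continuous_const.min continuous_id)
  have hclamp_mem : ∀ s, clamp s ∈ Icc (0:ℝ) 1 := by
    intro s
    constructor
    · exact le_max_left _ _
    · simp only [hclamp_def, max_le_iff]
      exact ⟨zero_le_one, min_le_left _ _⟩
  have hclamp_id : ∀ s ∈ Icc (0:ℝ) 1, clamp s = s := by
    intro s hs
    simp only [hclamp_def]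
    rw [min_eq_right hs.2, max_eq_right hs.1]
  set v : ℝ → ℝ := fun s => u (clamp s) with hv_def
  have hv_cont : Continuous v := hu_cont.comp_continuous hclamp_cont hclamp_mem
  -- bounds on u on Icc
  have habs_cont : ContinuousOn (fun t => |u t|) (Icc (0:ℝ) 1) := hu_cont.abs
  have hA1cpt : IsCompact ((fun t => |u t|) '' Icc (0:ℝ) 1) :=
    isCompact_Icc.image_of_continuousOn habs_cont
  have hA1ne : ((fun t => |u t|) '' Icc (0:ℝ) 1).Nonempty :=
    ⟨|u 0|, 0, by constructor <;> norm_num, rfl⟩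
  have hle_n : ∀ t ∈ Icc (0:ℝ) 1, u t ≤ ρ := by
    intro t ht
    have : |u t| ≤ nrm u := le_csSup hA1cpt.bddAbove ⟨t, ht, rfl⟩
    rw [hnu] at this
    exact (le_abs_self _).trans this
  have hge_n : ∀ t ∈ Icc (0:ℝ) 1, c * ρ ≤ u t := by
    intro t ht
    have h1 : c * ρ ≤ minOnIcc u 0 1 := by rw [← hnu]; exact hu_min
    have h2 : minOnIcc u 0 1 ≤ u t := by
      apply csInf_le
      · exact (isCompact_Icc.image_of_continuousOn hu_cont).bddBelow
      · exact ⟨t, ht, rfl⟩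
    linarith
  -- peak point
  obtain ⟨t₀, ht₀, hut₀'⟩ : ∃ t₀ ∈ Icc (0:ℝ) 1, |u t₀| = ρ := by
    have := hA1cpt.sSup_mem hA1ne
    rw [show sSup ((fun t => |u t|) '' Icc (0:ℝ) 1) = ρ from hnu] at this
    obtain ⟨t₀, ht₀, h⟩ := this
    exact ⟨t₀, ht₀, h⟩
  have hut₀ : u t₀ = ρ := by
    have := hge_n t₀ ht₀
    have hcρpos : 0 < c * ρ := mul_pos hc0 hρ
    rw [abs_of_pos (by linarith)] at hut₀'
    exact hut₀'
  -- measure conversions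
  have hres : volume.restrict (Ioc (0:ℝ) 1) = volume.restrict (Icc (0:ℝ) 1) :=
    Measure.restrict_congr_set Ioc_ae_eq_Icc
  have hA_ae : ∀ᵐ t ∂μA, t ∈ Icc (0:ℝ) 1 := by
    rw [ae_iff]
    simpa [compl_def] using hAcc
  -- φ := f s (v s)
  set φ : ℝ → ℝ := fun s => f s (v s) with hφ_def
  have hv0 : ∀ s, 0 ≤ v s := by
    intro s
    have := hge_n (clamp s) (hclamp_mem s)
    nlinarith
  have hφ0 : ∀ s, 0 ≤ φ s := fun s => hf_nonneg _ _ (hv0 s)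
  have mφ : AEMeasurable φ (volume.restrict (Icc (0:ℝ) 1)) :=
    carath_aemeas f hf_meas hf_cont v hv_cont hv0
  have hφ_bdd : ∀ᵐ s ∂(volume.restrict (Icc (0:ℝ) 1)), φ s ≤ fb * ρ := by
    filter_upwards [hfb, ae_restrict_mem measurableSet_Icc] with s hs hsI
    show f s (u (clamp s)) ≤ fb * ρ
    rw [hclamp_id s hsI]
    exact hs (u s) (hge_n s hsI) (hle_n s hsI)
  -- fb ≥ 0
  have hfb0 : 0 ≤ fb := by
    haveI : (ae (volume.restrict (Icc (0:ℝ) 1))).NeBot := by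
      rw [ae_neBot]
      intro hcon
      have := Measure.restrict_eq_zero.mp hcon
      rw [Real.volume_Icc] at this
      norm_num at this
    obtain ⟨t, ht⟩ := hfb.exists
    have h1 := hf_nonneg t (c*ρ) (by positivity)
    have h2 := ht (c*ρ) le_rfl hcρρ
    nlinarith
  -- kernel section measurability
  have hkt : ∀ t, Measurable (fun s => k t s) := fun t =>
    hk_meas.comp (measurable_const.prodMk measurable_id)
  -- section integrability
  have hΦpos : ∀ t ∈ Icc (0:ℝ) 1, ∀ᵐ s ∂(volume.restrict (Icc (0:ℝ) 1)),
      0 < k t s ∧ k t s ≤ Φ s ∧ 0 ≤ g s := by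
    intro t ht
    filter_upwards [hkΦ t ht, hg_nonneg, ae_restrict_mem measurableSet_Icc] with s h1 h2 hsI
    exact ⟨hk_pos t ht s hsI, h1.2, h2⟩
  have hint_kg : ∀ t ∈ Icc (0:ℝ) 1,
      Integrable (fun s => k t s * g s) (volume.restrict (Icc (0:ℝ) 1)) := by
    intro t ht
    refine Integrable.mono' hgΦ_int (((hkt t).mul hg_meas).aestronglyMeasurable) ?_
    filter_upwards [hΦpos t ht] with s ⟨h1, h2, h3⟩
    rw [Real.norm_eq_abs, abs_of_nonneg (mul_nonneg h1.le h3)]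
    nlinarith
  have hint_kgφ : ∀ t ∈ Icc (0:ℝ) 1,
      Integrable (fun s => k t s * g s * φ s) (volume.restrict (Icc (0:ℝ) 1)) := by
    intro t ht
    refine Integrable.mono' (hgΦ_int.mul_const (fb*ρ))
      ((((hkt t).mul hg_meas).aemeasurable.mul mφ).aestronglyMeasurable) ?_
    filter_upwards [hΦpos t ht, hφ_bdd] with s ⟨h1, h2, h3⟩ h4
    rw [Real.norm_eq_abs,
      abs_of_nonneg (mul_nonneg (mul_nonneg h1.le h3) (hφ0 s))]
    nlinarith [hφ0 s, mul_nonneg (mul_nonneg (sub_nonneg.mpr h2) h3) (hφ0 s),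
      mul_nonneg (mul_nonneg (h1.le.trans h2) h3) (sub_nonneg.mpr h4)]
  -- product integrability
  have hPmeas1 : AEStronglyMeasurable (fun p : ℝ × ℝ => k p.1 p.2 * g p.2 * φ p.2)
      (μA.prod (volume.restrict (Icc (0:ℝ) 1))) := by
    refine ((hk_meas.mul (hg_meas.comp measurable_snd)).aemeasurable.mul ?_).aestronglyMeasurable
    exact mφ.comp_quasiMeasurePreserving Measure.quasiMeasurePreserving_snd
  have hPmeas2 : AEStronglyMeasurable (fun p : ℝ × ℝ => k p.1 p.2 * g p.2)
      (μA.prod (volume.restrict (Icc (0:ℝ) 1))) :=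
    (hk_meas.mul (hg_meas.comp measurable_snd)).aestronglyMeasurable
  have hC0 : ∀ t ∈ Icc (0:ℝ) 1,
      (∫ s in Icc (0:ℝ) 1, ‖k t s * g s * φ s‖) ≤ (∫ s in Icc (0:ℝ) 1, g s * Φ s * (fb*ρ)) := by
    intro t ht
    refine integral_mono_ae (hint_kgφ t ht).norm (hgΦ_int.mul_const (fb*ρ)) ?_
    filter_upwards [hΦpos t ht, hφ_bdd] with s ⟨h1, h2, h3⟩ h4
    rw [Real.norm_eq_abs,
      abs_of_nonneg (mul_nonneg (mul_nonneg h1.le h3) (hφ0 s))]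
    nlinarith [hφ0 s, mul_nonneg (mul_nonneg (sub_nonneg.mpr h2) h3) (hφ0 s),
      mul_nonneg (mul_nonneg (h1.le.trans h2) h3) (sub_nonneg.mpr h4)]
  have hC0' : ∀ t ∈ Icc (0:ℝ) 1,
      (∫ s in Icc (0:ℝ) 1, ‖k t s * g s‖) ≤ (∫ s in Icc (0:ℝ) 1, g s * Φ s) := by
    intro t ht
    refine integral_mono_ae (hint_kg t ht).norm hgΦ_int ?_
    filter_upwards [hΦpos t ht] with s ⟨h1, h2, h3⟩
    rw [Real.norm_eq_abs, abs_of_nonneg (mul_nonneg h1.le h3)]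
    nlinarith
  have hPint1 : Integrable (fun p : ℝ × ℝ => k p.1 p.2 * g p.2 * φ p.2)
      (μA.prod (volume.restrict (Icc (0:ℝ) 1))) := by
    rw [integrable_prod_iff hPmeas1]
    constructor
    · filter_upwards [hA_ae] with t ht
      exact hint_kgφ t ht
    · refine Integrable.mono' (integrable_const (∫ s in Icc (0:ℝ) 1, g s * Φ s * (fb*ρ)))
        hPmeas1.norm.integral_prod_right' ?_
      filter_upwards [hA_ae] with t ht
      have h2 : 0 ≤ ∫ s in Icc (0:ℝ) 1, ‖k t s * g s * φ s‖ :=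
        integral_nonneg fun s => norm_nonneg _
      rw [Real.norm_eq_abs, abs_of_nonneg h2]
      exact hC0 t ht
  have hPint2 : Integrable (fun p : ℝ × ℝ => k p.1 p.2 * g p.2)
      (μA.prod (volume.restrict (Icc (0:ℝ) 1))) := by
    rw [integrable_prod_iff hPmeas2]
    constructor
    · filter_upwards [hA_ae] with t ht
      exact hint_kg t ht
    · refine Integrable.mono' (integrable_const (∫ s in Icc (0:ℝ) 1, g s * Φ s))
        hPmeas2.norm.integral_prod_right' ?_
      filter_upwards [hA_ae] with t ht
      have h2 : 0 ≤ ∫ s in Icc (0:ℝ) 1, ‖k t s * g s‖ :=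
        integral_nonneg fun s => norm_nonneg _
      rw [Real.norm_eq_abs, abs_of_nonneg h2]
      exact hC0' t ht
  -- marginals
  set J : ℝ → ℝ := fun t => ∫ s in Icc (0:ℝ) 1, k t s * g s * φ s with hJ_def
  set R : ℝ → ℝ := fun t => ∫ s in Icc (0:ℝ) 1, k t s * g s with hR_def
  have hJ_int : Integrable J μA := hPint1.integral_prod_left
  have hR_int : Integrable R μA := hPint2.integral_prod_left
  set Q : ℝ := ∫ s in Icc (0:ℝ) 1, (∫ t', k t' s ∂μA) * g s with hQ_def
  have hswap : (∫ t, R t ∂μA) = Q := by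
    have hs := integral_integral_swap (f := fun t s => k t s * g s)
      (μ := μA) (ν := volume.restrict (Icc (0:ℝ) 1)) hPint2
    rw [hR_def, hQ_def, hs]
    congr 1
    ext s
    exact integral_mul_const (g s) (fun t => k t s)
  -- the fixed point equation with J
  have heqJ : ∀ t ∈ Icc (0:ℝ) 1, μ * u t = γ t * H u + J t := by
    intro t ht
    have h0 := heq t ht
    rw [Tham] at h0
    rw [h0]
    congr 1
    rw [intervalIntegral.integral_of_le zero_le_one]
    show (∫ s, k t s * g s * f s (u s) ∂(volume.restrict (Ioc (0:ℝ) 1))) = J t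
    rw [hres, hJ_def]
    refine setIntegral_congr_fun measurableSet_Icc ?_
    intro s hs
    show k t s * g s * f s (u s) = k t s * g s * f s (u (clamp s))
    rw [hclamp_id s hs]
  -- γ integrable wrt μA
  have hγabs : ∀ t ∈ Icc (0:ℝ) 1, |γ t| ≤ nrm γ := by
    intro t ht
    exact le_csSup (isCompact_Icc.image_of_continuousOn hγ_cont.abs).bddAbove ⟨t, ht, rfl⟩
  have hnrmγ0 : 0 ≤ nrm γ := (abs_nonneg (γ 0)).trans (hγabs 0 (by constructor <;> norm_num))
  have hγ_int : Integrable γ μA := by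
    have hg1 : Integrable (fun t => γ (clamp t)) μA := by
      refine Integrable.mono' (integrable_const (nrm γ))
        ((hγ_cont.comp_continuous hclamp_cont hclamp_mem).aestronglyMeasurable) ?_
      exact Filter.Eventually.of_forall fun t => by
        rw [Real.norm_eq_abs]; exact hγabs _ (hclamp_mem t)
    refine hg1.congr ?_
    filter_upwards [hA_ae] with t ht
    rw [hclamp_id t ht]
  -- integrate the equation against μA
  set A : ℝ := ∫ t', γ t' ∂μA with hA_def
  set αu : ℝ := ∫ t, u t ∂μA with hαu_def
  set αJ : ℝ := ∫ t, J t ∂μA with hαJ_def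
  have hEq2 : μ * αu = A * H u + αJ := by
    have h1 : (∫ t, μ * u t ∂μA) = μ * αu := by
      rw [hαu_def]; exact integral_const_mul μ u
    have h2 : (∫ t, μ * u t ∂μA) = ∫ t, (γ t * H u + J t) ∂μA := by
      refine integral_congr_ae ?_
      filter_upwards [hA_ae] with t ht
      exact heqJ t ht
    have h3 : (∫ t, (γ t * H u + J t) ∂μA) = (∫ t, γ t * H u ∂μA) + αJ :=
      integral_add (hγ_int.mul_const _) hJ_int
    have h4 : (∫ t, γ t * H u ∂μA) = A * H u := by
      rw [hA_def, integral_mul_const]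
    rw [← h1, h2, h3, h4]
  have hαu0 : 0 ≤ αu := by
    refine integral_nonneg_of_ae ?_
    filter_upwards [hA_ae] with t ht
    simp only [Pi.zero_apply]
    have h1 := hge_n t ht
    have h2 := mul_pos hc0 hρ
    linarith
  have hHu_le : H u ≤ αu := hHle u huK hnu
  have hA1 : A < 1 := hαγ
  have h1A : 0 < 1 - A := by linarith
  have hHu2 : H u * (1 - A) ≤ αJ := by
    have h1 : H u ≤ μ * αu := hHu_le.trans (le_mul_of_one_le_left hαu0 hμ)
    rw [hEq2] at h1
    nlinarith
  have hHu3 : H u ≤ αJ / (1 - A) := by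
    rw [le_div_iff₀ h1A]
    exact hHu2
  -- J ≤ fbρ R pointwise, hence αJ ≤ fbρ Q
  have hJle : ∀ t ∈ Icc (0:ℝ) 1, J t ≤ (fb*ρ) * R t := by
    intro t ht
    rw [hJ_def, hR_def]
    simp only
    rw [show (fb*ρ) * ∫ s in Icc (0:ℝ) 1, k t s * g s
        = ∫ s in Icc (0:ℝ) 1, (fb*ρ) * (k t s * g s) from (integral_const_mul _ _).symm]
    refine integral_mono_ae (hint_kgφ t ht) ((hint_kg t ht).const_mul (fb*ρ)) ?_
    filter_upwards [hΦpos t ht, hφ_bdd] with s ⟨h1, h2, h3⟩ h4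
    nlinarith [hφ0 s, mul_nonneg (mul_nonneg h1.le h3) (sub_nonneg.mpr h4)]
  have hαJle : αJ ≤ (fb*ρ) * Q := by
    have h1 : αJ ≤ ∫ t, (fb*ρ) * R t ∂μA := by
      refine integral_mono_ae hJ_int (hR_int.const_mul _) ?_
      filter_upwards [hA_ae] with t ht
      exact hJle t ht
    rw [integral_const_mul, hswap] at h1
    exact h1
  -- bounds on R and Q
  have hR0 : ∀ t ∈ Icc (0:ℝ) 1, 0 ≤ R t := by
    intro t ht
    refine integral_nonneg_of_ae ?_
    filter_upwards [hΦpos t ht] with s ⟨h1, h2, h3⟩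
    simp only [Pi.zero_apply]
    exact mul_nonneg h1.le h3
  have hRle : ∀ t ∈ Icc (0:ℝ) 1, R t ≤ ∫ s in Icc (0:ℝ) 1, g s * Φ s := by
    intro t ht
    refine integral_mono_ae (hint_kg t ht) hgΦ_int ?_
    filter_upwards [hΦpos t ht] with s ⟨h1, h2, h3⟩
    nlinarith
  have hQ0 : 0 ≤ Q := by
    rw [← hswap]
    refine integral_nonneg_of_ae ?_
    filter_upwards [hA_ae] with t ht
    simp only [Pi.zero_apply]
    exact hR0 t ht
  -- γ nonneg on Icc
  have hγ0 : ∀ t ∈ Icc (0:ℝ) 1, 0 ≤ γ t := by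
    intro t ht
    have := hγ_low t ht
    nlinarith [hc₂.1]
  -- identify interval integrals with set integrals
  have hQi : (∫ s in (0:ℝ)..1, (∫ t', k t' s ∂μA) * g s) = Q := by
    rw [intervalIntegral.integral_of_le zero_le_one]
    show (∫ s, (∫ t', k t' s ∂μA) * g s ∂(volume.restrict (Ioc (0:ℝ) 1))) = Q
    rw [hres, hQ_def]
  have hRi : ∀ t, (∫ s in (0:ℝ)..1, k t s * g s) = R t := by
    intro t
    rw [intervalIntegral.integral_of_le zero_le_one]
    show (∫ s, k t s * g s ∂(volume.restrict (Ioc (0:ℝ) 1))) = R t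
    rw [hres, hR_def]
  -- the sup S
  set expr : ℝ → ℝ := fun t => γ t / (1 - A) * (∫ s in (0:ℝ)..1, (∫ t', k t' s ∂μA) * g s) +
      ∫ s in (0:ℝ)..1, k t s * g s with hexpr_def
  set S : ℝ := sSup (expr '' Icc (0:ℝ) 1) with hS_def
  have hbddS : BddAbove (expr '' Icc (0:ℝ) 1) := by
    refine ⟨nrm γ / (1 - A) * Q + ∫ s in Icc (0:ℝ) 1, g s * Φ s, ?_⟩
    rintro x ⟨t, ht, rfl⟩
    rw [hexpr_def]
    simp only
    rw [hQi, hRi t]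
    have h1 : γ t / (1 - A) ≤ nrm γ / (1 - A) := by
      apply div_le_div_of_nonneg_right ?_ h1A.le
      · exact (le_abs_self _).trans (hγabs t ht)
    have h2 : γ t / (1 - A) * Q ≤ nrm γ / (1 - A) * Q :=
      mul_le_mul_of_nonneg_right h1 hQ0
    linarith [hRle t ht]
  have hexprS : expr t₀ ≤ S := le_csSup hbddS ⟨t₀, ht₀, rfl⟩
  -- final contradiction
  have h_t0 : μ * ρ = γ t₀ * H u + J t₀ := by
    rw [← hut₀]; exact heqJ t₀ ht₀
  have hγt0 : 0 ≤ γ t₀ := hγ0 t₀ ht₀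
  have hstep1 : γ t₀ * H u ≤ γ t₀ / (1 - A) * ((fb*ρ) * Q) := by
    have h1 : H u ≤ ((fb*ρ) * Q) / (1 - A) :=
      hHu3.trans (div_le_div_of_nonneg_right hαJle h1A.le)
    calc γ t₀ * H u ≤ γ t₀ * (((fb*ρ) * Q) / (1 - A)) := mul_le_mul_of_nonneg_left h1 hγt0
      _ = γ t₀ / (1 - A) * ((fb*ρ) * Q) := by ring
  have hstep2 : μ * ρ ≤ (fb*ρ) * expr t₀ := by
    have hJt0 := hJle t₀ ht₀
    rw [h_t0, hexpr_def]
    simp only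
    rw [hQi, hRi t₀]
    nlinarith [hstep1]
  have hstep3 : (fb*ρ) * expr t₀ ≤ (fb*ρ) * S :=
    mul_le_mul_of_nonneg_left hexprS (mul_nonneg hfb0 hρ.le)
  have hfinal : fb * S * ρ < ρ := by
    nlinarith [hfbS]
  have hμρ : ρ ≤ μ * ρ := le_mul_of_one_le_left hρ.le hμ
  nlinarith [hstep2, hstep3]
end

section
/- Assume there exists a finite positive Borel measure dA on [0,1], with α[u] := ∫₀¹ u(t) dA(t) and 𝒦(s) := ∫₀¹ k(t,s) dA(t), such that α[γ] < 1, H[u] ≤ α[u] for every u ∈ K, and f(t,u) < m_α |u| for every t ∈ [0,1] and every u ∈ ℝ with u ≠ 0, where 1/m_α := sup_{t∈[0,1]} { |γ(t)|/(1−α[γ]) · ∫₀¹ 𝒦(s) g(s) ds + ∫₀¹ |k(t,s)| g(s) ds }. Then the only solution of u = Tu in K is the zero function: if u ∈ K and u = Tu, then u = 0. -/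
open MeasureTheory Set

private lemma nrm_le' {v : ℝ → ℝ} {B : ℝ} (h : ∀ t ∈ Icc (0:ℝ) 1, |v t| ≤ B) : nrm v ≤ B :=
  csSup_le (Set.Nonempty.image _ ⟨0, le_rfl, zero_le_one⟩)
    (by rintro y ⟨t, ht, rfl⟩; exact h t ht)

private lemma nrm_bddAbove {v : ℝ → ℝ} (hv : ContinuousOn v (Icc (0:ℝ) 1)) :
    BddAbove ((fun t => |v t|) '' Icc (0:ℝ) 1) :=
  (isCompact_Icc.image_of_continuousOn hv.abs).bddAbove

private lemma abs_le_nrm {v : ℝ → ℝ} (hv : ContinuousOn v (Icc (0:ℝ) 1)) {t : ℝ}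
    (ht : t ∈ Icc (0:ℝ) 1) : |v t| ≤ nrm v :=
  le_csSup (nrm_bddAbove hv) (mem_image_of_mem _ ht)

private lemma nrm_nonneg' {v : ℝ → ℝ} (hv : ContinuousOn v (Icc (0:ℝ) 1)) : 0 ≤ nrm v :=
  le_trans (abs_nonneg _) (abs_le_nrm hv ⟨le_rfl, zero_le_one⟩)

private lemma exists_nrm {v : ℝ → ℝ} (hv : ContinuousOn v (Icc (0:ℝ) 1)) :
    ∃ t₀ ∈ Icc (0:ℝ) 1, |v t₀| = nrm v := by
  have hcomp : IsCompact ((fun t => |v t|) '' Icc (0:ℝ) 1) :=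
    isCompact_Icc.image_of_continuousOn hv.abs
  have hne : ((fun t => |v t|) '' Icc (0:ℝ) 1).Nonempty :=
    ⟨|v 0|, mem_image_of_mem _ ⟨le_rfl, zero_le_one⟩⟩
  obtain ⟨t₀, ht₀, h⟩ := hcomp.sSup_mem hne
  exact ⟨t₀, ht₀, h⟩

private lemma minOn_le' {v : ℝ → ℝ} {a b : ℝ} (hv : ContinuousOn v (Icc a b)) {t : ℝ}
    (ht : t ∈ Icc a b) : minOnIcc v a b ≤ v t :=
  csInf_le (isCompact_Icc.image_of_continuousOn hv).bddBelow (mem_image_of_mem _ ht)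

private lemma le_minOn' {v : ℝ → ℝ} {a b m : ℝ} (hab : a ≤ b) (h : ∀ t ∈ Icc a b, m ≤ v t) :
    m ≤ minOnIcc v a b :=
  le_csInf (Set.Nonempty.image _ ⟨a, le_rfl, hab⟩) (by rintro y ⟨t, ht, rfl⟩; exact h t ht)

set_option maxHeartbeats 4000000 in
theorem stmt7
    (k : ℝ → ℝ → ℝ) (g : ℝ → ℝ) (f : ℝ → ℝ → ℝ) (Φ γ : ℝ → ℝ) (a b c₁ c₂ c : ℝ)
    (H : (ℝ → ℝ) → ℝ) (K : Set (ℝ → ℝ))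
    (hk_meas : Measurable (Function.uncurry k))
    (hk_cont : ∀ τ ∈ Icc (0:ℝ) 1, ∀ᵐ s ∂(volume.restrict (Icc (0:ℝ) 1)),
      Filter.Tendsto (fun t => |k t s - k τ s|) (nhdsWithin τ (Icc (0:ℝ) 1)) (nhds 0))
    (ha : 0 ≤ a) (hab : a ≤ b) (hb : b ≤ 1)
    (hΦ_meas : Measurable Φ)
    (hΦ_bdd : ∃ C, ∀ᵐ s ∂(volume.restrict (Icc (0:ℝ) 1)), |Φ s| ≤ C)
    (hc₁ : c₁ ∈ Ioc (0:ℝ) 1)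
    (hkΦ_abs : ∀ t ∈ Icc (0:ℝ) 1, ∀ᵐ s ∂(volume.restrict (Icc (0:ℝ) 1)), |k t s| ≤ Φ s)
    (hkΦ_low : ∀ t ∈ Icc a b, ∀ᵐ s ∂(volume.restrict (Icc (0:ℝ) 1)), c₁ * Φ s ≤ k t s)
    (hg_meas : Measurable g)
    (hg_nonneg : ∀ᵐ s ∂(volume.restrict (Icc (0:ℝ) 1)), 0 ≤ g s)
    (hgΦ_int : IntegrableOn (fun s => g s * Φ s) (Icc (0:ℝ) 1))
    (hΦg_pos : 0 < ∫ s in a..b, Φ s * g s)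
    (hf_meas : ∀ u : ℝ, Measurable (fun t => f t u))
    (hf_cont : ∀ᵐ t ∂(volume.restrict (Icc (0:ℝ) 1)), Continuous (f t))
    (hf_nonneg : ∀ t u : ℝ, 0 ≤ f t u)
    (hf_bdd : ∀ r > 0, ∃ C, ∀ᵐ t ∂(volume.restrict (Icc (0:ℝ) 1)), ∀ u ∈ Icc (-r) r, f t u ≤ C)
    (hγ_cont : ContinuousOn γ (Icc (0:ℝ) 1))
    (hc₂ : c₂ ∈ Ioc (0:ℝ) 1)
    (hγ_low : ∀ t ∈ Icc a b, c₂ * nrm γ ≤ γ t)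
    (hc : c = min c₁ c₂)
    (hK : K = {u : ℝ → ℝ | ContinuousOn u (Icc (0:ℝ) 1) ∧ c * nrm u ≤ minOnIcc u a b})
    (hH_nonneg : ∀ u ∈ K, 0 ≤ H u)
    (hH_cont : ∀ u ∈ K, ∀ ε > 0, ∃ δ > 0, ∀ v ∈ K,
      nrm (fun t => u t - v t) < δ → |H u - H v| < ε)
    (hH_bdd : ∀ M : ℝ, ∃ M', ∀ u ∈ K, nrm u ≤ M → H u ≤ M')
    (μA : Measure ℝ) (hμA_fin : IsFiniteMeasure μA) (hμA_supp : μA ((Icc (0:ℝ) 1)ᶜ) = 0)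
    (hαγ : (∫ t, γ t ∂μA) < 1)
    (hHα : ∀ u ∈ K, H u ≤ ∫ t, u t ∂μA)
    (hf_lt : ∀ t ∈ Icc (0:ℝ) 1, ∀ u : ℝ, u ≠ 0 →
      f t u < (sSup ((fun t' => |γ t'| / (1 - ∫ t'', γ t'' ∂μA) *
        (∫ s in (0:ℝ)..1, (∫ t'', k t'' s ∂μA) * g s) +
        ∫ s in (0:ℝ)..1, |k t' s| * g s) '' Icc (0:ℝ) 1))⁻¹ * |u|) :
    ∀ u ∈ K, (∀ t ∈ Icc (0:ℝ) 1, u t = Tham k g f γ H u t) →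
      ∀ t ∈ Icc (0:ℝ) 1, u t = 0 := by
  haveI := hμA_fin
  intro u huK hfix
  have huK' := huK
  rw [hK] at huK'
  obtain ⟨hu_cont, hu_min⟩ := huK'
  -- basic constants
  have hc0 : 0 < c := by rw [hc]; exact lt_min hc₁.1 hc₂.1
  have hcc1 : c ≤ c₁ := by rw [hc]; exact min_le_left _ _
  have hsubI : Icc a b ⊆ Icc (0:ℝ) 1 := Icc_subset_Icc ha hb
  -- norm of u
  set r : ℝ := nrm u with hr
  have hr_bdd : ∀ t ∈ Icc (0:ℝ) 1, |u t| ≤ r := fun t ht => abs_le_nrm hu_cont ht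
  have hr0 : 0 ≤ r := nrm_nonneg' hu_cont
  -- it suffices to show r = 0
  rcases eq_or_lt_of_le hr0 with hr0' | hrpos
  · intro t ht
    have := hr_bdd t ht
    rw [← hr0'] at this
    have := abs_nonneg (u t)
    have : |u t| = 0 := le_antisymm ‹|u t| ≤ 0› ‹0 ≤ |u t|›
    exact abs_eq_zero.mp this
  exfalso
  -- notation
  set ν : Measure ℝ := volume.restrict (Set.Ioc (0:ℝ) 1) with hν
  set A0 : ℝ := ∫ t, γ t ∂μA with hA0
  set S : ℝ := sSup ((fun t' => |γ t'| / (1 - ∫ t'', γ t'' ∂μA) *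
        (∫ s in (0:ℝ)..1, (∫ t'', k t'' s ∂μA) * g s) +
        ∫ s in (0:ℝ)..1, |k t' s| * g s) '' Icc (0:ℝ) 1) with hSdef
  set m : ℝ := S⁻¹ with hm
  set KK : ℝ → ℝ := fun s => ∫ t, k t s ∂μA with hKKdef
  set Hu : ℝ := H u with hHu
  have h1γ : 0 < 1 - A0 := by linarith
  have hHu0 : 0 ≤ Hu := hH_nonneg u huK
  -- transfer a.e. facts from Icc to Ioc
  have haeν : ∀ {p : ℝ → Prop}, (∀ᵐ s ∂(volume.restrict (Icc (0:ℝ) 1)), p s) →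
      (∀ᵐ s ∂ν, p s) := fun h => ae_restrict_of_ae_restrict_of_subset Ioc_subset_Icc_self h
  have haeI_μA : ∀ᵐ t ∂μA, t ∈ Icc (0:ℝ) 1 := by
    rw [Filter.eventually_iff, mem_ae_iff]
    exact hμA_supp
  have hsmemν : ∀ᵐ s ∂ν, s ∈ Icc (0:ℝ) 1 := by
    have : ∀ᵐ s ∂ν, s ∈ Set.Ioc (0:ℝ) 1 :=
      ae_restrict_mem measurableSet_Ioc
    filter_upwards [this] with s hs
    exact ⟨hs.1.le, hs.2⟩
  have hμArestr : μA.restrict (Icc (0:ℝ) 1) = μA :=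
    Measure.restrict_eq_self_of_ae_mem haeI_μA
  -- basic integrability facts
  have hGb_int : Integrable (fun s => Φ s * g s) ν := by
    have := hgΦ_int.mono_set Ioc_subset_Icc_self
    exact (show IntegrableOn (fun s => Φ s * g s) (Ioc 0 1) volume from by simpa only [mul_comm] using this)
  have hΦ0ν : ∀ᵐ s ∂ν, 0 ≤ Φ s := by
    filter_upwards [haeν (hkΦ_abs 0 ⟨le_rfl, zero_le_one⟩)] with s hs
    exact le_trans (abs_nonneg _) hs
  have hg0ν : ∀ᵐ s ∂ν, 0 ≤ g s := haeν hg_nonneg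
  -- m is positive
  have hm_pos : 0 < m := by
    have h := hf_lt 0 ⟨le_rfl, zero_le_one⟩ 1 one_ne_zero
    have h0 := hf_nonneg 0 1
    simp only [abs_one, mul_one] at h
    exact lt_of_le_of_lt h0 h
  have hS_pos : 0 < S := by
    rw [hm] at hm_pos; exact inv_pos.mp hm_pos
  have hmS : m * S = 1 := by rw [hm]; exact inv_mul_cancel₀ (ne_of_gt hS_pos)
  have hmr_pos : 0 < m * r := mul_pos hm_pos hrpos
  -- ψ and its measurability
  set ψ : ℝ → ℝ := fun s => f s (u s) with hψdef
  have hψ_aem : AEMeasurable ψ ν := by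
    classical
    obtain ⟨N, hNsub, hNmeas, hNnull⟩ := exists_measurable_superset_of_null
      (ae_iff.mp hf_cont)
    set f' : ℝ → ℝ → ℝ := fun t x => if t ∈ N then 0 else f t x with hf'def
    have hf'_cont : ∀ t, Continuous (f' t) := by
      intro t
      by_cases h : t ∈ N
      · simpa [hf'def, h] using continuous_const
      · have hcont : Continuous (f t) := by
          by_contra hcont
          exact h (hNsub hcont)
        simpa [hf'def, h] using hcont
    have hf'_meas : ∀ x, Measurable fun t => f' t x := fun x =>
      Measurable.ite hNmeas measurable_const (hf_meas x)
    have hunc : Measurable (Function.uncurry fun x t => f' t x) :=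
      measurable_uncurry_of_continuous_of_measurable (fun t => hf'_cont t) hf'_meas
    have huae : AEMeasurable u ν := by
      have h1 : AEMeasurable u (volume.restrict (Icc (0:ℝ) 1)) :=
        hu_cont.aemeasurable measurableSet_Icc
      exact h1.mono_measure (Measure.restrict_mono Ioc_subset_Icc_self le_rfl)
    obtain ⟨u', hu'meas, hu'eq⟩ := huae
    have hψm_meas : Measurable fun s => f' s (u' s) :=
      hunc.comp (hu'meas.prodMk measurable_id)
    have hNν : ∀ᵐ s ∂ν, s ∉ N := by
      refine measure_eq_zero_iff_ae_notMem.mp ?_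
      have hle : ν N ≤ volume.restrict (Icc (0:ℝ) 1) N :=
        Measure.le_iff'.1 (Measure.restrict_mono Ioc_subset_Icc_self le_rfl) N
      exact le_antisymm (hNnull ▸ hle) zero_le
    refine ⟨fun s => f' s (u' s), hψm_meas, ?_⟩
    filter_upwards [hu'eq, hNν] with s h1 h2
    simp only [hψdef, hf'def]
    rw [if_neg h2, h1]
  have hψ0 : ∀ᵐ s ∂ν, 0 ≤ ψ s := Filter.Eventually.of_forall fun s => hf_nonneg s (u s)
  have hψlt : ∀ᵐ s ∂ν, ψ s < m * r := by
    filter_upwards [haeν hf_cont, hsmemν] with s hcont hsI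
    rcases eq_or_ne (u s) 0 with h0 | h0
    · have hf0 : f s 0 ≤ 0 := by
        have htend : Filter.Tendsto (fun n : ℕ => f s (1 / ((n:ℝ) + 1)))
            Filter.atTop (nhds (f s 0)) := by
          have h2 : Filter.Tendsto (fun n : ℕ => 1 / ((n:ℝ) + 1)) Filter.atTop (nhds 0) :=
            tendsto_one_div_add_atTop_nhds_zero_nat
          exact ((hcont.tendsto 0).comp h2)
        have hbd : ∀ n : ℕ, f s (1 / ((n:ℝ) + 1)) ≤ m * (1 / ((n:ℝ) + 1)) := by
          intro n
          have hne : (1 / ((n:ℝ) + 1)) ≠ 0 := by positivity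
          have h3 := hf_lt s hsI _ hne
          rw [abs_of_pos (by positivity : (0:ℝ) < 1 / ((n:ℝ) + 1))] at h3
          exact h3.le
        have htend2 : Filter.Tendsto (fun n : ℕ => m * (1 / ((n:ℝ) + 1)))
            Filter.atTop (nhds 0) := by
          simpa using tendsto_one_div_add_atTop_nhds_zero_nat.const_mul m
        exact le_of_tendsto_of_tendsto' htend htend2 hbd
      have : ψ s = f s 0 := by rw [hψdef]; simp only; rw [h0]
      rw [this]
      exact lt_of_le_of_lt hf0 hmr_pos
    · have h3 := hf_lt s hsI (u s) h0
      have h2 : m * |u s| ≤ m * r := mul_le_mul_of_nonneg_left (hr_bdd s hsI) hm_pos.le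
      exact lt_of_lt_of_le h3 h2
  have hψle : ∀ᵐ s ∂ν, ψ s ≤ m * r := by filter_upwards [hψlt] with s h; exact h.le
  -- product-measure domination
  have hAmeas : MeasurableSet {p : ℝ × ℝ | |k p.1 p.2| ≤ Φ p.2} :=
    measurableSet_le hk_meas.abs (hΦ_meas.comp measurable_snd)
  have hAnull : (μA.prod ν) {p : ℝ × ℝ | |k p.1 p.2| ≤ Φ p.2}ᶜ = 0 := by
    rw [Measure.prod_apply hAmeas.compl]
    have h0 : ∀ᵐ t ∂μA, ν (Prod.mk t ⁻¹' {p : ℝ × ℝ | |k p.1 p.2| ≤ Φ p.2}ᶜ) = 0 := by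
      filter_upwards [haeI_μA] with t ht
      have h1 := haeν (hkΦ_abs t ht)
      rw [Filter.eventually_iff, mem_ae_iff] at h1
      have h2 : (Prod.mk t ⁻¹' {p : ℝ × ℝ | |k p.1 p.2| ≤ Φ p.2}ᶜ)
          = {s : ℝ | |k t s| ≤ Φ s}ᶜ := by
        ext s; simp
      rw [h2]; exact h1
    rw [lintegral_congr_ae h0, lintegral_zero]
  have hk_prod_bdd : ∀ᵐ p ∂(μA.prod ν), |k p.1 p.2| ≤ Φ p.2 := by
    rw [Filter.eventually_iff, mem_ae_iff]; exact hAnull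
  have hk_swap_bdd : ∀ᵐ s ∂ν, ∀ᵐ t ∂μA, |k t s| ≤ Φ s := by
    have hmB : MeasurableSet {q : ℝ × ℝ | |k q.2 q.1| ≤ Φ q.1} :=
      measurableSet_le ((hk_meas.comp measurable_swap).abs) (hΦ_meas.comp measurable_fst)
    have hswap : (ν.prod μA) {q : ℝ × ℝ | |k q.2 q.1| ≤ Φ q.1}ᶜ = 0 := by
      rw [← Measure.prod_swap, Measure.map_apply measurable_swap hmB.compl]
      have h2 : Prod.swap ⁻¹' {q : ℝ × ℝ | |k q.2 q.1| ≤ Φ q.1}ᶜ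
          = {p : ℝ × ℝ | |k p.1 p.2| ≤ Φ p.2}ᶜ := by
        ext p; simp [Prod.swap]
      rw [h2]; exact hAnull
    exact Measure.ae_ae_of_ae_prod (by rw [Filter.eventually_iff, mem_ae_iff]; exact hswap)
  have hKK_bd : ∀ᵐ s ∂ν, |KK s| ≤ Φ s * (μA Set.univ).toReal := by
    filter_upwards [hk_swap_bdd] with s hs
    have := norm_integral_le_of_norm_le_const (μ := μA) (f := fun t => k t s) (C := Φ s)
      (by filter_upwards [hs] with t ht; rwa [Real.norm_eq_abs])
    rwa [Real.norm_eq_abs] at this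
  have hKK_meas : StronglyMeasurable KK := by
    have : StronglyMeasurable (fun p : ℝ × ℝ => k p.2 p.1) :=
      (hk_meas.comp measurable_swap).stronglyMeasurable
    exact this.integral_prod_right'
  have hlift : ∀ {pr : ℝ → Prop}, (∀ᵐ s ∂ν, pr s) → (∀ᵐ q ∂(μA.prod ν), pr q.2) := by
    intro pr h
    rw [Filter.eventually_iff, mem_ae_iff] at h ⊢
    have h2 : {q : ℝ × ℝ | pr q.2}ᶜ = Prod.snd ⁻¹' {s : ℝ | pr s}ᶜ := rfl
    rw [h2]
    exact Measure.quasiMeasurePreserving_snd.preimage_null h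
  -- product integrability for bounded nonneg χ
  have hprod : ∀ (χ : ℝ → ℝ) (C : ℝ), AEMeasurable χ ν → (∀ᵐ s ∂ν, 0 ≤ χ s) →
      (∀ᵐ s ∂ν, χ s ≤ C) →
      Integrable (fun p : ℝ × ℝ => k p.1 p.2 * g p.2 * χ p.2) (μA.prod ν) := by
    intro χ C hχae hχ0 hχC
    have hmaj : Integrable (fun p : ℝ × ℝ => Φ p.2 * g p.2 * C) (μA.prod ν) := by
      have hmeas : AEStronglyMeasurable (fun p : ℝ × ℝ => Φ p.2 * g p.2 * C) (μA.prod ν) :=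
        (((hΦ_meas.comp measurable_snd).mul (hg_meas.comp measurable_snd)).mul
          measurable_const).aestronglyMeasurable
      rw [integrable_prod_iff hmeas]
      refine ⟨Filter.Eventually.of_forall fun t => hGb_int.mul_const C, ?_⟩
      simpa using integrable_const (μ := μA) (∫ y, ‖Φ y * g y * C‖ ∂ν)
    refine hmaj.mono' ?_ ?_
    · exact ((hk_meas.mul (hg_meas.comp measurable_snd)).aemeasurable.mul
        (hχae.comp_quasiMeasurePreserving Measure.quasiMeasurePreserving_snd)).aestronglyMeasurable
    · filter_upwards [hk_prod_bdd, hlift hg0ν, hlift hΦ0ν, hlift hχ0, hlift hχC]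
        with p h1 h2 h3 h4 h5
      rw [Real.norm_eq_abs, abs_mul, abs_mul, abs_of_nonneg h2, abs_of_nonneg h4]
      have h6 : |k p.1 p.2| * g p.2 ≤ Φ p.2 * g p.2 := mul_le_mul_of_nonneg_right h1 h2
      exact mul_le_mul h6 h5 h4 (mul_nonneg h3 h2)
  -- Fubini computation
  have hfub : ∀ χ : ℝ → ℝ,
      Integrable (fun p : ℝ × ℝ => k p.1 p.2 * g p.2 * χ p.2) (μA.prod ν) →
      (∫ t, (∫ s, k t s * g s * χ s ∂ν) ∂μA) = ∫ s, KK s * (g s * χ s) ∂ν := by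
    intro χ hint
    have hswap := integral_integral_swap (f := fun t s => k t s * g s * χ s)
      (μ := μA) (ν := ν) hint
    rw [hswap]
    refine integral_congr_ae (Filter.Eventually.of_forall fun s => ?_)
    simp_rw [mul_assoc]
    exact integral_mul_const (g s * χ s) (fun t => k t s)
  -- integrability of KK-weighted integrands
  have hKKχ_int : ∀ (χ : ℝ → ℝ) (C : ℝ), AEMeasurable χ ν → (∀ᵐ s ∂ν, 0 ≤ χ s) →
      (∀ᵐ s ∂ν, χ s ≤ C) → Integrable (fun s => KK s * (g s * χ s)) ν := by
    intro χ C hχae hχ0 hχC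
    have hcA0 : 0 ≤ (μA Set.univ).toReal := ENNReal.toReal_nonneg
    refine (hGb_int.mul_const ((μA Set.univ).toReal * C)).mono' ?_ ?_
    · exact ((hKK_meas.measurable.aemeasurable).mul
        ((hg_meas.aemeasurable).mul hχae)).aestronglyMeasurable
    · filter_upwards [hKK_bd, hΦ0ν, hg0ν, hχ0, hχC] with s h1 h2 h3 h4 h5
      rw [Real.norm_eq_abs, abs_mul, abs_of_nonneg (mul_nonneg h3 h4)]
      calc |KK s| * (g s * χ s) ≤ (Φ s * (μA Set.univ).toReal) * (g s * χ s) :=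
            mul_le_mul_of_nonneg_right h1 (mul_nonneg h3 h4)
        _ ≤ (Φ s * (μA Set.univ).toReal) * (g s * C) :=
            mul_le_mul_of_nonneg_left (mul_le_mul_of_nonneg_left h5 h3)
              (mul_nonneg h2 hcA0)
        _ = Φ s * g s * ((μA Set.univ).toReal * C) := by ring
  -- the cone trick: nonnegativity of the KK-integrals
  have hKpos : ∀ (C : ℝ) (χ : ℝ → ℝ), Measurable χ → (∀ s, 0 ≤ χ s) → (∀ s, χ s ≤ C) →
      0 ≤ ∫ s, KK s * (g s * χ s) ∂ν := by
    intro C χ hχm hχ0 hχC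
    have hintp := hprod χ C hχm.aemeasurable (.of_forall hχ0) (.of_forall hχC)
    set v : ℝ → ℝ := fun t => ∫ s, k t s * g s * χ s ∂ν with hvdef
    set Mχ : ℝ := ∫ s, Φ s * g s * χ s ∂ν with hMχ
    have hΦgχ_int : Integrable (fun s => Φ s * g s * χ s) ν := by
      refine (hGb_int.mul_const C).mono'
        ((hΦ_meas.mul hg_meas).mul hχm).aestronglyMeasurable ?_
      filter_upwards [hΦ0ν, hg0ν] with s h1 h2
      rw [Real.norm_eq_abs, abs_mul, abs_mul, abs_of_nonneg h1, abs_of_nonneg h2,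
        abs_of_nonneg (hχ0 s)]
      exact mul_le_mul_of_nonneg_left (hχC s) (mul_nonneg h1 h2)
    have hvt_meas : ∀ t : ℝ, AEStronglyMeasurable (fun s => k t s * g s * χ s) ν := fun t =>
      (((hk_meas.comp measurable_prodMk_left).mul hg_meas).mul hχm).aestronglyMeasurable
    have hvt_bound : ∀ t ∈ Icc (0:ℝ) 1, ∀ᵐ s ∂ν, ‖k t s * g s * χ s‖ ≤ Φ s * g s * χ s := by
      intro t ht
      filter_upwards [haeν (hkΦ_abs t ht), hg0ν] with s h1 h2
      rw [Real.norm_eq_abs, abs_mul, abs_mul, abs_of_nonneg h2, abs_of_nonneg (hχ0 s)]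
      exact mul_le_mul_of_nonneg_right (mul_le_mul_of_nonneg_right h1 h2) (hχ0 s)
    have hvt_int : ∀ t ∈ Icc (0:ℝ) 1, Integrable (fun s => k t s * g s * χ s) ν := fun t ht =>
      hΦgχ_int.mono' (hvt_meas t) (hvt_bound t ht)
    have hv_bd : ∀ t ∈ Icc (0:ℝ) 1, |v t| ≤ Mχ := by
      intro t ht
      have h1 := norm_integral_le_of_norm_le hΦgχ_int (hvt_bound t ht)
      rwa [Real.norm_eq_abs] at h1
    have hv_low : ∀ t ∈ Icc a b, c₁ * Mχ ≤ v t := by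
      intro t ht
      have h1 : c₁ * Mχ = ∫ s, c₁ * (Φ s * g s * χ s) ∂ν := (integral_const_mul c₁ _).symm
      rw [h1]
      refine integral_mono_ae (hΦgχ_int.const_mul c₁) (hvt_int t (hsubI ht)) ?_
      filter_upwards [haeν (hkΦ_low t ht), hg0ν] with s h2 h3
      calc c₁ * (Φ s * g s * χ s) = (c₁ * Φ s) * (g s * χ s) := by ring
        _ ≤ k t s * (g s * χ s) := mul_le_mul_of_nonneg_right h2 (mul_nonneg h3 (hχ0 s))
        _ = k t s * g s * χ s := by ring
    have hv_cont : ContinuousOn v (Icc (0:ℝ) 1) := by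
      intro τ hτ
      have htend : Filter.Tendsto v (nhdsWithin τ (Icc (0:ℝ) 1))
          (nhds (∫ s, k τ s * g s * χ s ∂ν)) := by
        apply tendsto_integral_filter_of_dominated_convergence (bound := fun s => Φ s * g s * C)
        · exact Filter.Eventually.of_forall fun t => hvt_meas t
        · filter_upwards [self_mem_nhdsWithin] with t ht
          filter_upwards [hvt_bound t ht, hΦ0ν, hg0ν] with s h1 h2 h3
          exact le_trans h1 (mul_le_mul_of_nonneg_left (hχC s) (mul_nonneg h2 h3))
        · exact hGb_int.mul_const C
        · filter_upwards [haeν (hk_cont τ hτ)] with s hs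
          have h1 : Filter.Tendsto (fun t => k t s) (nhdsWithin τ (Icc (0:ℝ) 1))
              (nhds (k τ s)) := by
            rw [tendsto_iff_dist_tendsto_zero]
            simpa [Real.dist_eq] using hs
          simpa [mul_assoc] using h1.mul_const (g s * χ s)
      exact htend
    have hMnrm : nrm v ≤ Mχ := nrm_le' hv_bd
    have hbddA : BddAbove ((fun t => |v t|) '' Icc (0:ℝ) 1) :=
      ⟨Mχ, by rintro y ⟨t, ht, rfl⟩; exact hv_bd t ht⟩
    have hnrm0 : 0 ≤ nrm v := le_trans (abs_nonneg _)
      (le_csSup hbddA (mem_image_of_mem _ ⟨le_rfl, zero_le_one⟩))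
    have hvK : v ∈ K := by
      rw [hK]
      refine ⟨hv_cont, ?_⟩
      have h1 : c * nrm v ≤ c₁ * nrm v := mul_le_mul_of_nonneg_right hcc1 hnrm0
      have h2 : c₁ * nrm v ≤ c₁ * Mχ := mul_le_mul_of_nonneg_left hMnrm hc₁.1.le
      have h3 : c₁ * Mχ ≤ minOnIcc v a b := le_minOn' hab hv_low
      exact le_trans h1 (le_trans h2 h3)
    have h0H := hH_nonneg v hvK
    have h1H := hHα v hvK
    have h2 : (∫ t, v t ∂μA) = ∫ s, KK s * (g s * χ s) ∂ν := hfub χ hintp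
    linarith
  -- fixed point equation in set-integral form
  set W : ℝ → ℝ := fun t => ∫ s, k t s * g s * ψ s ∂ν with hWdef
  have hfix' : ∀ t ∈ Icc (0:ℝ) 1, u t = γ t * Hu + W t := by
    intro t ht
    have := hfix t ht
    rw [Tham, intervalIntegral.integral_of_le zero_le_one] at this
    exact this
  -- the H u bound
  set P1 : ℝ := ∫ s, KK s * (g s * ψ s) ∂ν with hP1
  have hFψ_int : Integrable (fun p : ℝ × ℝ => k p.1 p.2 * g p.2 * ψ p.2) (μA.prod ν) :=
    hprod ψ (m * r) hψ_aem hψ0 hψle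
  have hHu_le : (1 - A0) * Hu ≤ P1 := by
    have hγ_int : Integrable γ μA := by
      refine (integrable_const (nrm γ)).mono' ?_ ?_
      · have h1 := hγ_cont.aestronglyMeasurable (μ := μA) measurableSet_Icc
        rwa [hμArestr] at h1
      · filter_upwards [haeI_μA] with t ht
        rw [Real.norm_eq_abs]; exact abs_le_nrm hγ_cont ht
    have hW_int : Integrable W μA := hFψ_int.integral_prod_left
    have hint_u : (∫ t, u t ∂μA) = A0 * Hu + (∫ t, W t ∂μA) := by
      have hcong : (∫ t, u t ∂μA) = ∫ t, (γ t * Hu + W t) ∂μA := by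
        refine integral_congr_ae ?_
        filter_upwards [haeI_μA] with t ht
        exact hfix' t ht
      rw [hcong, integral_add (hγ_int.mul_const Hu) hW_int, integral_mul_const]
    have hWμ : (∫ t, W t ∂μA) = P1 := hfub ψ hFψ_int
    have h2 := hHα u huK
    rw [hint_u, hWμ] at h2
    linarith
  -- comparison of P1 with m r Q1'
  set Q1' : ℝ := ∫ s, KK s * g s ∂ν with hQ1'
  have hKKgψ_int : Integrable (fun s => KK s * (g s * ψ s)) ν :=
    hKKχ_int ψ (m * r) hψ_aem hψ0 hψle
  obtain ⟨ψm, hψm_meas, hψm_eq⟩ := id hψ_aem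
  set χ' : ℝ → ℝ := fun s => max 0 (min (m * r - ψm s) (m * r)) with hχ'def
  have hχ'_meas : Measurable χ' :=
    measurable_const.max ((measurable_const.sub hψm_meas).min measurable_const)
  have hχ'0 : ∀ s, 0 ≤ χ' s := fun s => le_max_left _ _
  have hχ'C : ∀ s, χ' s ≤ m * r := fun s => max_le hmr_pos.le (min_le_right _ _)
  have hχ'_eq : ∀ᵐ s ∂ν, χ' s = m * r - ψ s := by
    filter_upwards [hψm_eq, hψ0, hψlt] with s h1 h2 h3
    rw [hχ'def]
    simp only
    rw [← h1, min_eq_left (by linarith), max_eq_right (by linarith)]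
  have hχ'_pos : ∀ᵐ s ∂ν, 0 < χ' s := by
    filter_upwards [hχ'_eq, hψlt] with s h1 h2
    rw [h1]; linarith
  have hKKχ'_int : Integrable (fun s => KK s * (g s * χ' s)) ν :=
    hKKχ_int χ' (m * r) hχ'_meas.aemeasurable (.of_forall hχ'0) (.of_forall hχ'C)
  have hsum : P1 + (∫ s, KK s * (g s * χ' s) ∂ν) = m * r * Q1' := by
    rw [hP1, ← integral_add hKKgψ_int hKKχ'_int]
    have hcong : ∀ᵐ s ∂ν, KK s * (g s * ψ s) + KK s * (g s * χ' s)
        = m * r * (KK s * g s) := by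
      filter_upwards [hχ'_eq] with s h
      rw [h]; ring
    rw [integral_congr_ae hcong, integral_const_mul]
  have hP1'_0 : 0 ≤ ∫ s, KK s * (g s * χ' s) ∂ν := hKpos (m * r) χ' hχ'_meas hχ'0 hχ'C
  have hP1_le : P1 ≤ m * r * Q1' := by linarith
  have hχ'_facts : 0 < P1 → P1 = m * r * Q1' → False := by
    intro hP1pos heq
    have hz : (∫ s, KK s * (g s * χ' s) ∂ν) = 0 := by linarith
    have hae_nonneg : 0 ≤ᵐ[ν] fun s => KK s * (g s * χ' s) := by
      refine ae_nonneg_of_forall_setIntegral_nonneg hKKχ'_int ?_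
      intro E hE hEfin
      have h1 : ∫ s in E, KK s * (g s * χ' s) ∂ν
          = ∫ s, KK s * (g s * (χ' s * E.indicator (fun _ => (1:ℝ)) s)) ∂ν := by
        rw [← integral_indicator hE]
        refine integral_congr_ae (.of_forall fun s => ?_)
        by_cases hs : s ∈ E
        · simp [Set.indicator_of_mem hs]
        · simp [Set.indicator_of_notMem hs]
      rw [h1]
      refine hKpos (m * r) _ (hχ'_meas.mul (measurable_one.indicator hE)) ?_ ?_
      · intro s; by_cases hs : s ∈ E
        · simp [Set.indicator_of_mem hs, hχ'0 s]
        · simp [Set.indicator_of_notMem hs]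
      · intro s; by_cases hs : s ∈ E
        · simpa [Set.indicator_of_mem hs] using hχ'C s
        · simpa [Set.indicator_of_notMem hs] using hmr_pos.le
    have hae_zero : (fun s => KK s * (g s * χ' s)) =ᵐ[ν] 0 :=
      (integral_eq_zero_iff_of_nonneg_ae hae_nonneg hKKχ'_int).mp hz
    have hKKgψ0 : (fun s => KK s * (g s * ψ s)) =ᵐ[ν] 0 := by
      filter_upwards [hae_zero, hχ'_pos] with s h1 h2
      have h3 : KK s * (g s * χ' s) = 0 := by simpa using h1
      have h4 : (KK s * g s) * χ' s = 0 := by rw [← h3]; ring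
      have h5 : KK s * g s = 0 := by
        rcases mul_eq_zero.mp h4 with h | h
        · exact h
        · exact absurd h (ne_of_gt h2)
      show KK s * (g s * ψ s) = 0
      calc KK s * (g s * ψ s) = (KK s * g s) * ψ s := by ring
        _ = 0 := by rw [h5, zero_mul]
    have hP1z : P1 = 0 := by rw [hP1]; exact integral_eq_zero_of_ae hKKgψ0
    linarith
  -- the max point
  obtain ⟨t₀, ht₀, habs⟩ := exists_nrm hu_cont
  set Gt : ℝ → ℝ := fun s => |k t₀ s| * g s with hGt
  set B2 : ℝ := ∫ s, Gt s ∂ν with hB2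
  set P2 : ℝ := ∫ s, Gt s * ψ s ∂ν with hP2
  have hkt₀_meas : Measurable fun s => k t₀ s := hk_meas.comp measurable_prodMk_left
  have hGt_meas : Measurable Gt := hkt₀_meas.abs.mul hg_meas
  have hGt_nonneg : ∀ᵐ s ∂ν, 0 ≤ Gt s := by
    filter_upwards [hg0ν] with s h; exact mul_nonneg (abs_nonneg _) h
  have hGt_bd : ∀ᵐ s ∂ν, Gt s ≤ Φ s * g s := by
    filter_upwards [haeν (hkΦ_abs t₀ ht₀), hg0ν] with s h1 h2
    exact mul_le_mul_of_nonneg_right h1 h2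
  have hGt_int : Integrable Gt ν := by
    refine hGb_int.mono' hGt_meas.aestronglyMeasurable ?_
    filter_upwards [hGt_nonneg, hGt_bd] with s h1 h2
    rwa [Real.norm_eq_abs, abs_of_nonneg h1]
  have hGtψ_int : Integrable (fun s => Gt s * ψ s) ν := by
    refine (hGb_int.mul_const (m * r)).mono'
      (hGt_meas.aemeasurable.mul hψ_aem).aestronglyMeasurable ?_
    filter_upwards [hGt_nonneg, hGt_bd, hψ0, hψle, hΦ0ν, hg0ν] with s h1 h2 h3 h4 h5 h6
    rw [Real.norm_eq_abs, abs_of_nonneg (mul_nonneg h1 h3)]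
    exact mul_le_mul h2 h4 h3 (mul_nonneg h5 h6)
  have hW_bd : |W t₀| ≤ P2 := by
    have hbound : ∀ᵐ s ∂ν, ‖k t₀ s * g s * ψ s‖ ≤ Gt s * ψ s := by
      filter_upwards [hg0ν, hψ0] with s h1 h2
      rw [Real.norm_eq_abs, abs_mul, abs_mul, abs_of_nonneg h1, abs_of_nonneg h2]
    have h := norm_integral_le_of_norm_le hGtψ_int hbound
    rwa [Real.norm_eq_abs] at h
  have hB2_0 : 0 ≤ B2 := integral_nonneg_of_ae hGt_nonneg
  have hP2_0 : 0 ≤ P2 := integral_nonneg_of_ae (by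
    filter_upwards [hGt_nonneg, hψ0] with s h1 h2; exact mul_nonneg h1 h2)
  have hP2_le : P2 ≤ m * r * B2 := by
    have h1 : P2 ≤ ∫ s, m * r * Gt s ∂ν := by
      rw [hP2]
      refine integral_mono_ae hGtψ_int (hGt_int.const_mul (m * r)) ?_
      filter_upwards [hGt_nonneg, hψle] with s h1 h2
      calc Gt s * ψ s ≤ Gt s * (m * r) := mul_le_mul_of_nonneg_left h2 h1
        _ = m * r * Gt s := by ring
    rwa [integral_const_mul] at h1
  have hP2_lt : 0 < B2 → P2 < m * r * B2 := by
    intro hB2pos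
    rcases lt_or_eq_of_le hP2_le with h | h
    · exact h
    · exfalso
      have hdiff : (∫ s, (m * r * Gt s - Gt s * ψ s) ∂ν) = 0 := by
        rw [integral_sub (hGt_int.const_mul (m * r)) hGtψ_int, integral_const_mul]
        show m * r * B2 - P2 = 0
        rw [h]; ring
      have hnn : 0 ≤ᵐ[ν] fun s => m * r * Gt s - Gt s * ψ s := by
        filter_upwards [hGt_nonneg, hψle] with s h1 h2
        have h3 : 0 ≤ Gt s * (m * r - ψ s) := mul_nonneg h1 (by linarith)
        calc (0:ℝ) ≤ Gt s * (m * r - ψ s) := h3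
          _ = m * r * Gt s - Gt s * ψ s := by ring
      have hz := (integral_eq_zero_iff_of_nonneg_ae hnn
        ((hGt_int.const_mul (m * r)).sub hGtψ_int)).mp hdiff
      have hGt0 : Gt =ᵐ[ν] 0 := by
        filter_upwards [hz, hψlt] with s h1 h2
        have h3 : m * r * Gt s - Gt s * ψ s = 0 := by simpa using h1
        have h4 : Gt s * (m * r - ψ s) = 0 := by rw [← h3]; ring
        rcases mul_eq_zero.mp h4 with h5 | h5
        · simpa using h5
        · exact absurd h5 (by intro hc; linarith)
      have hB2z : B2 = 0 := by rw [hB2]; exact integral_eq_zero_of_ae hGt0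
      linarith
  -- the sup bound
  have hkg_int : ∀ t ∈ Icc (0:ℝ) 1, Integrable (fun s => |k t s| * g s) ν := by
    intro t ht
    refine hGb_int.mono'
      (((hk_meas.comp measurable_prodMk_left).abs.mul hg_meas).aestronglyMeasurable) ?_
    filter_upwards [haeν (hkΦ_abs t ht), hg0ν] with s h1 h2
    rw [Real.norm_eq_abs, abs_mul, abs_abs, abs_of_nonneg h2]
    exact mul_le_mul_of_nonneg_right h1 h2
  have hkg_le : ∀ t ∈ Icc (0:ℝ) 1, (∫ s, |k t s| * g s ∂ν) ≤ ∫ s, Φ s * g s ∂ν := by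
    intro t ht
    refine integral_mono_ae (hkg_int t ht) hGb_int ?_
    filter_upwards [haeν (hkΦ_abs t ht), hg0ν] with s h1 h2
    exact mul_le_mul_of_nonneg_right h1 h2
  have hSval : |γ t₀| / (1 - A0) * Q1' + B2 ≤ S := by
    rw [hSdef]
    refine le_csSup ?_ ?_
    · refine ⟨nrm γ / (1 - A0) * |Q1'| + ∫ s, Φ s * g s ∂ν, ?_⟩
      rintro y ⟨t', ht', rfl⟩
      simp only
      rw [intervalIntegral.integral_of_le zero_le_one,
        intervalIntegral.integral_of_le zero_le_one]
      have e1 : (∫ s in Set.Ioc (0:ℝ) 1, (∫ t'', k t'' s ∂μA) * g s) = Q1' := rfl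
      have e2 : (1 - ∫ t'', γ t'' ∂μA) = 1 - A0 := rfl
      rw [e1, e2]
      have t1 : |γ t'| / (1 - A0) * Q1' ≤ nrm γ / (1 - A0) * |Q1'| := by
        have h1 : |γ t'| / (1 - A0) * Q1' ≤ |γ t'| / (1 - A0) * |Q1'| :=
          mul_le_mul_of_nonneg_left (le_abs_self _) (div_nonneg (abs_nonneg _) h1γ.le)
        have h2 : |γ t'| / (1 - A0) * |Q1'| ≤ nrm γ / (1 - A0) * |Q1'| :=
          mul_le_mul_of_nonneg_right
            ((div_le_div_iff_of_pos_right h1γ).mpr (abs_le_nrm hγ_cont ht')) (abs_nonneg _)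
        linarith
      have t2 : (∫ s in Set.Ioc (0:ℝ) 1, |k t' s| * g s) ≤ ∫ s, Φ s * g s ∂ν :=
        hkg_le t' ht'
      exact add_le_add t1 t2
    · refine ⟨t₀, ht₀, ?_⟩
      simp only
      rw [intervalIntegral.integral_of_le zero_le_one,
        intervalIntegral.integral_of_le zero_le_one]
  -- final chain
  have hγHu : |γ t₀| * Hu ≤ m * r * (|γ t₀| / (1 - A0) * Q1') := by
    have h1 : Hu ≤ P1 / (1 - A0) := by
      rw [le_div_iff₀ h1γ]; linarith [hHu_le]
    have h2 : |γ t₀| * Hu ≤ |γ t₀| * (P1 / (1 - A0)) :=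
      mul_le_mul_of_nonneg_left h1 (abs_nonneg _)
    have h3 : |γ t₀| * (P1 / (1 - A0)) ≤ |γ t₀| * ((m * r * Q1') / (1 - A0)) := by
      exact mul_le_mul_of_nonneg_left ((div_le_div_iff_of_pos_right h1γ).mpr hP1_le) (abs_nonneg _)
    calc |γ t₀| * Hu ≤ |γ t₀| * ((m * r * Q1') / (1 - A0)) := le_trans h2 h3
      _ = m * r * (|γ t₀| / (1 - A0) * Q1') := by ring
  have hr_le : r ≤ |γ t₀| * Hu + P2 := by
    have h1 := hfix' t₀ ht₀
    calc r = |u t₀| := habs.symm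
      _ = |γ t₀ * Hu + W t₀| := by rw [h1]
      _ ≤ |γ t₀ * Hu| + |W t₀| := abs_add_le _ _
      _ = |γ t₀| * Hu + |W t₀| := by rw [abs_mul, abs_of_nonneg hHu0]
      _ ≤ |γ t₀| * Hu + P2 := by linarith [hW_bd]
  rcases lt_or_ge 0 B2 with hB2pos | hB2le
  · -- strict inequality via the kernel term
    have : r < m * r * (|γ t₀| / (1 - A0) * Q1' + B2) := by
      have := hP2_lt hB2pos
      calc r ≤ |γ t₀| * Hu + P2 := hr_le
        _ < m * r * (|γ t₀| / (1 - A0) * Q1') + m * r * B2 := by linarith [hγHu]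
        _ = m * r * (|γ t₀| / (1 - A0) * Q1' + B2) := by ring
    have h2 : m * r * (|γ t₀| / (1 - A0) * Q1' + B2) ≤ m * r * S :=
      mul_le_mul_of_nonneg_left hSval hmr_pos.le
    have h3 : m * r * S = r := by
      calc m * r * S = r * (m * S) := by ring
        _ = r := by rw [hmS, mul_one]
    linarith
  · have hB2z : B2 = 0 := le_antisymm hB2le hB2_0
    have hP2z : P2 ≤ 0 := by
      have := hP2_le; rw [hB2z] at this; linarith
    have hrHu : r ≤ |γ t₀| * Hu := by linarith [hr_le, hP2z, hP2_0]
    have hHupos : 0 < Hu := by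
      rcases eq_or_lt_of_le hHu0 with h | h
      · exfalso; rw [← h, mul_zero] at hrHu; linarith
      · exact h
    have hγpos : 0 < |γ t₀| := by
      rcases eq_or_lt_of_le (abs_nonneg (γ t₀)) with h | h
      · exfalso; rw [← h, zero_mul] at hrHu; linarith
      · exact h
    have hP1pos : 0 < P1 := lt_of_lt_of_le (mul_pos h1γ hHupos) hHu_le
    -- all inequalities must be equalities, forcing P1 = m r Q1'
    have hch1 : r ≤ m * r * (|γ t₀| / (1 - A0) * Q1') := le_trans hrHu hγHu
    have hch2 : |γ t₀| / (1 - A0) * P1 ≤ m * r * (|γ t₀| / (1 - A0) * Q1') := by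
      have : |γ t₀| / (1 - A0) * P1 ≤ |γ t₀| / (1 - A0) * (m * r * Q1') :=
        mul_le_mul_of_nonneg_left hP1_le (div_nonneg (abs_nonneg _) h1γ.le)
      linarith [this.trans_eq (by ring : |γ t₀| / (1 - A0) * (m * r * Q1')
        = m * r * (|γ t₀| / (1 - A0) * Q1'))]
    have hSv : |γ t₀| / (1 - A0) * Q1' ≤ S := by
      have := hSval; rw [hB2z] at this; linarith
    have heq : P1 = m * r * Q1' := by
      by_contra hne
      have hlt : P1 < m * r * Q1' := lt_of_le_of_ne hP1_le hne
      have h4 : |γ t₀| / (1 - A0) * P1 < |γ t₀| / (1 - A0) * (m * r * Q1') :=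
        mul_lt_mul_of_pos_left hlt (div_pos hγpos h1γ)
      have h5 : r ≤ |γ t₀| / (1 - A0) * P1 := by
        have h1 : Hu ≤ P1 / (1 - A0) := by rw [le_div_iff₀ h1γ]; linarith [hHu_le]
        calc r ≤ |γ t₀| * Hu := hrHu
          _ ≤ |γ t₀| * (P1 / (1 - A0)) := mul_le_mul_of_nonneg_left h1 (abs_nonneg _)
          _ = |γ t₀| / (1 - A0) * P1 := by ring
      have h6 : |γ t₀| / (1 - A0) * (m * r * Q1') = m * r * (|γ t₀| / (1 - A0) * Q1') := by ring
      have h7 : m * r * (|γ t₀| / (1 - A0) * Q1') ≤ m * r * S :=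
        mul_le_mul_of_nonneg_left hSv hmr_pos.le
      have h8 : m * r * S = r := by
        calc m * r * S = r * (m * S) := by ring
          _ = r := by rw [hmS, mul_one]
      linarith
    exact hχ'_facts hP1pos heq
end

section
/- For all ρ₁, ρ₂ > 0 the sets K_{ρ₁,ρ₂} and V_{ρ₁,ρ₂} have the following properties, where boundaries ∂ are taken relative to the subspace topology on K: (1) K_{ρ₁,ρ₂} ⊆ V_{ρ₁,ρ₂} ⊆ K_{ρ₁/c₁, ρ₂/c₂}; (2) (w₁,w₂) ∈ ∂V_{ρ₁,ρ₂} if and only if (w₁,w₂) ∈ K and min_{t∈[a_i,b_i]} w_i(t) = ρ_i for some i ∈ {1,2} while min_{t∈[a_j,b_j]} w_j(t) ≤ ρ_j for j ≠ i; (3) if (w₁,w₂) ∈ ∂V_{ρ₁,ρ₂}, then for some i ∈ {1,2} one has ρ_i ≤ w_i(t) ≤ ρ_i/c_i for each t ∈ [a_i,b_i], and for j ≠ i one has 0 ≤ w_j(t) ≤ ρ_j/c_j for each t ∈ [a_j,b_j]; (4) (w₁,w₂) ∈ ∂K_{ρ₁,ρ₂} if and only if (w₁,w₂) ∈ K and ‖w_i‖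 = ρ_i for some i ∈ {1,2} while ‖w_j‖ ≤ ρ_j for j ≠ i. -/
open Set Pointwise Filter Topology

/-- The unit interval `[0,1]` as a type. -/
abbrev I01 := Set.Icc (0:ℝ) 1

/-- Minimum (infimum) of a continuous function `w : C([0,1],ℝ)` over the points of `[0,1]`
lying in `[a,b]`. -/
noncomputable def cmin (w : C(I01, ℝ)) (a b : ℝ) : ℝ :=
  sInf ((fun t : I01 => w t) '' {t : I01 | a ≤ (t : ℝ) ∧ (t : ℝ) ≤ b})

lemma apply_le_norm (w : C(I01, ℝ)) (t : I01) : w t ≤ ‖w‖ :=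
  le_trans (le_abs_self _) (by simpa [Real.norm_eq_abs] using w.norm_coe_le_norm t)

lemma neg_norm_le_apply (w : C(I01, ℝ)) (t : I01) : -‖w‖ ≤ w t := by
  have := w.norm_coe_le_norm t
  rw [Real.norm_eq_abs] at this
  linarith [neg_abs_le (w t)]

lemma cmin_bddBelow (w : C(I01, ℝ)) (a b : ℝ) :
    BddBelow ((fun t : I01 => w t) '' {t : I01 | a ≤ (t : ℝ) ∧ (t : ℝ) ≤ b}) := by
  refine ⟨-‖w‖, ?_⟩
  rintro y ⟨t, -, rfl⟩
  exact neg_norm_le_apply w t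

lemma cmin_nonempty {a b : ℝ} (ha : 0 ≤ a) (hab : a ≤ b) (hb : b ≤ 1) (w : C(I01, ℝ)) :
    ((fun t : I01 => w t) '' {t : I01 | a ≤ (t : ℝ) ∧ (t : ℝ) ≤ b}).Nonempty :=
  ⟨w ⟨a, ha, hab.trans hb⟩, ⟨⟨a, ha, hab.trans hb⟩, ⟨le_refl _, hab⟩, rfl⟩⟩

lemma cmin_le_apply (w : C(I01, ℝ)) {a b : ℝ} {t : I01} (h1 : a ≤ (t:ℝ)) (h2 : (t:ℝ) ≤ b) :
    cmin w a b ≤ w t :=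
  csInf_le (cmin_bddBelow w a b) ⟨t, ⟨h1, h2⟩, rfl⟩

lemma cmin_le_norm {a b : ℝ} (ha : 0 ≤ a) (hab : a ≤ b) (hb : b ≤ 1) (w : C(I01, ℝ)) :
    cmin w a b ≤ ‖w‖ :=
  le_trans (cmin_le_apply w (t := ⟨a, ha, hab.trans hb⟩) (le_refl a) hab)
    (apply_le_norm w _)

lemma cmin_smul {a b : ℝ} (w : C(I01, ℝ)) {r : ℝ} (hr : 0 ≤ r) :
    cmin (r • w) a b = r * cmin w a b := by
  unfold cmin
  have himg : (fun t : I01 => (r • w) t) '' {t : I01 | a ≤ (t : ℝ) ∧ (t : ℝ) ≤ b}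
      = r • ((fun t : I01 => w t) '' {t : I01 | a ≤ (t : ℝ) ∧ (t : ℝ) ≤ b}) := by
    rw [← Set.image_smul, Set.image_image]
    rfl
  rw [himg, Real.sInf_smul_of_nonneg hr]
  rfl

lemma cmin_lipschitz {a b : ℝ} (ha : 0 ≤ a) (hab : a ≤ b) (hb : b ≤ 1) :
    LipschitzWith 1 (fun w : C(I01, ℝ) => cmin w a b) := by
  have key : ∀ u v : C(I01, ℝ), cmin u a b ≤ cmin v a b + ‖u - v‖ := by
    intro u v
    have : cmin u a b - ‖u - v‖ ≤ cmin v a b := by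
      apply le_csInf (cmin_nonempty ha hab hb v)
      rintro y ⟨t, ht, rfl⟩
      have h1 : cmin u a b ≤ u t := cmin_le_apply u ht.1 ht.2
      have h2 : |u t - v t| ≤ ‖u - v‖ := by
        simpa using (u - v).norm_coe_le_norm t
      have := abs_le.mp h2
      linarith [this.1]
    linarith
  apply LipschitzWith.of_dist_le_mul
  intro u v
  rw [Real.dist_eq, dist_eq_norm]
  have h1 := key u v
  have h2 := key v u
  rw [abs_le]
  refine ⟨?_, ?_⟩ <;> simp only [NNReal.coe_one, one_mul] <;>
    [skip; skip] <;> linarith [norm_sub_rev v u]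

lemma frontier_char {X : Type*} [TopologicalSpace X] {f g : X → ℝ}
    (hf : Continuous f) (hg : Continuous g) {ρ₁ ρ₂ : ℝ}
    {S : Set X} (hS : S = {x | f x < ρ₁ ∧ g x < ρ₂})
    (hcl : ∀ x, f x ≤ ρ₁ → g x ≤ ρ₂ → x ∈ closure S) :
    ∀ x, x ∈ frontier S ↔ ((f x = ρ₁ ∧ g x ≤ ρ₂) ∨ (g x = ρ₂ ∧ f x ≤ ρ₁)) := by
  have hopen : IsOpen S := by
    rw [hS]; exact (isOpen_lt hf continuous_const).inter (isOpen_lt hg continuous_const)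
  have hfr : frontier S = closure S \ S := hopen.frontier_eq
  intro x
  rw [hfr]
  constructor
  · rintro ⟨hxc, hxn⟩
    have hsub : closure S ⊆ {x | f x ≤ ρ₁ ∧ g x ≤ ρ₂} :=
      closure_minimal (by rw [hS]; rintro y ⟨h1, h2⟩; exact ⟨h1.le, h2.le⟩)
        ((isClosed_le hf continuous_const).inter (isClosed_le hg continuous_const))
    obtain ⟨h1, h2⟩ := hsub hxc
    rw [hS] at hxn
    rcases h1.lt_or_eq with h | h
    · right
      refine ⟨?_, h1⟩
      rcases h2.lt_or_eq with h' | h'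
      · exact absurd ⟨h, h'⟩ hxn
      · exact h'
    · exact Or.inl ⟨h, h2⟩
  · rintro (⟨h1, h2⟩ | ⟨h1, h2⟩)
    · refine ⟨hcl x h1.le h2, ?_⟩
      rw [hS]; rintro ⟨h', -⟩; exact absurd h1 h'.ne
    · refine ⟨hcl x h2 h1.le, ?_⟩
      rw [hS]; rintro ⟨-, h'⟩; exact absurd h1 h'.ne

lemma closure_scale {E : Type*} [TopologicalSpace E] [AddCommMonoid E] [Module ℝ E]
    [ContinuousSMul ℝ E]
    {K : Set (E × E)} (hK : ∀ w ∈ K, ∀ r : ℝ, 0 ≤ r → (r • w.1, r • w.2) ∈ K)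
    {F G : E → ℝ} (hF : ∀ u : E, ∀ r : ℝ, 0 ≤ r → F (r • u) = r * F u)
    (hG : ∀ u : E, ∀ r : ℝ, 0 ≤ r → G (r • u) = r * G u)
    {ρ₁ ρ₂ : ℝ} (hρ₁ : 0 < ρ₁) (hρ₂ : 0 < ρ₂)
    {S : Set K} (hS : S = {w : K | F (w : E × E).1 < ρ₁ ∧ G (w : E × E).2 < ρ₂}) :
    ∀ w : K, F (w : E × E).1 ≤ ρ₁ → G (w : E × E).2 ≤ ρ₂ → w ∈ closure S := by
  intro w h1 h2
  set u := (w : E × E).1 with hu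
  set v := (w : E × E).2 with hv
  set rs : ℕ → ℝ := fun n => 1 - 1/((n:ℝ)+1) with hrs
  have hr0 : ∀ n : ℕ, 0 ≤ rs n := by
    intro n
    have h1n : 1/((n:ℝ)+1) ≤ 1 := by
      rw [div_le_one (by positivity)]
      simp
    simp only [hrs]
    linarith
  have hr1 : ∀ n : ℕ, rs n < 1 := by
    intro n
    have : 0 < 1/((n:ℝ)+1) := by positivity
    simp only [hrs]
    linarith
  have hmem : ∀ n : ℕ, (rs n • u, rs n • v) ∈ K := fun n => hK _ w.2 _ (hr0 n)
  set seq : ℕ → K := fun n => ⟨(rs n • u, rs n • v), hmem n⟩ with hseq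
  have htend : Tendsto seq atTop (𝓝 w) := by
    rw [Topology.IsEmbedding.subtypeVal.tendsto_nhds_iff]
    have hrt : Tendsto rs atTop (𝓝 1) := by
      have := tendsto_one_div_add_atTop_nhds_zero_nat (𝕜 := ℝ)
      simpa [hrs] using Filter.Tendsto.const_sub 1 this
    have h1 : Tendsto (fun n => rs n • u) atTop (𝓝 u) := by
      simpa using hrt.smul_const u
    have h2 : Tendsto (fun n => rs n • v) atTop (𝓝 v) := by
      simpa using hrt.smul_const v
    exact h1.prodMk_nhds h2
  apply mem_closure_of_tendsto htend
  apply Eventually.of_forall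
  intro n
  rw [hS]
  constructor
  · show F (rs n • u) < ρ₁
    rw [hF u _ (hr0 n)]
    calc rs n * F u ≤ rs n * ρ₁ := mul_le_mul_of_nonneg_left h1 (hr0 n)
      _ < ρ₁ := by nlinarith [hr1 n]
  · show G (rs n • v) < ρ₂
    rw [hG v _ (hr0 n)]
    calc rs n * G v ≤ rs n * ρ₂ := mul_le_mul_of_nonneg_left h2 (hr0 n)
      _ < ρ₂ := by nlinarith [hr1 n]

set_option maxHeartbeats 1000000 in
theorem stmt9 (a₁ b₁ a₂ b₂ c₁ c₂ : ℝ)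
    (ha₁ : 0 ≤ a₁) (hab₁ : a₁ ≤ b₁) (hb₁ : b₁ ≤ 1)
    (ha₂ : 0 ≤ a₂) (hab₂ : a₂ ≤ b₂) (hb₂ : b₂ ≤ 1)
    (hc₁ : c₁ ∈ Ioc (0:ℝ) 1) (hc₂ : c₂ ∈ Ioc (0:ℝ) 1)
    (K : Set (C(I01, ℝ) × C(I01, ℝ)))
    (hK : K = {w : C(I01, ℝ) × C(I01, ℝ) |
      c₁ * ‖w.1‖ ≤ cmin w.1 a₁ b₁ ∧ c₂ * ‖w.2‖ ≤ cmin w.2 a₂ b₂})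
    (ρ₁ ρ₂ : ℝ) (hρ₁ : 0 < ρ₁) (hρ₂ : 0 < ρ₂)
    (KR VR : Set K)
    (hKR : KR = {w : K | ‖(w : C(I01, ℝ) × C(I01, ℝ)).1‖ < ρ₁ ∧
      ‖(w : C(I01, ℝ) × C(I01, ℝ)).2‖ < ρ₂})
    (hVR : VR = {w : K | cmin (w : C(I01, ℝ) × C(I01, ℝ)).1 a₁ b₁ < ρ₁ ∧
      cmin (w : C(I01, ℝ) × C(I01, ℝ)).2 a₂ b₂ < ρ₂}) :
    -- (1) nesting
    (KR ⊆ VR ∧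
      VR ⊆ {w : K | ‖(w : C(I01, ℝ) × C(I01, ℝ)).1‖ < ρ₁ / c₁ ∧
        ‖(w : C(I01, ℝ) × C(I01, ℝ)).2‖ < ρ₂ / c₂}) ∧
    -- (2) boundary of V
    (∀ w : K, w ∈ frontier VR ↔
      ((cmin (w : C(I01, ℝ) × C(I01, ℝ)).1 a₁ b₁ = ρ₁ ∧
        cmin (w : C(I01, ℝ) × C(I01, ℝ)).2 a₂ b₂ ≤ ρ₂) ∨
       (cmin (w : C(I01, ℝ) × C(I01, ℝ)).2 a₂ b₂ = ρ₂ ∧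
        cmin (w : C(I01, ℝ) × C(I01, ℝ)).1 a₁ b₁ ≤ ρ₁))) ∧
    -- (3) pointwise bounds on the boundary of V
    (∀ w : K, w ∈ frontier VR →
      (((∀ t : I01, a₁ ≤ (t : ℝ) → (t : ℝ) ≤ b₁ →
          ρ₁ ≤ (w : C(I01, ℝ) × C(I01, ℝ)).1 t ∧ (w : C(I01, ℝ) × C(I01, ℝ)).1 t ≤ ρ₁ / c₁) ∧
        (∀ t : I01, a₂ ≤ (t : ℝ) → (t : ℝ) ≤ b₂ →
          0 ≤ (w : C(I01, ℝ) × C(I01, ℝ)).2 t ∧ (w : C(I01, ℝ) × C(I01, ℝ)).2 t ≤ ρ₂ / c₂)) ∨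
       ((∀ t : I01, a₂ ≤ (t : ℝ) → (t : ℝ) ≤ b₂ →
          ρ₂ ≤ (w : C(I01, ℝ) × C(I01, ℝ)).2 t ∧ (w : C(I01, ℝ) × C(I01, ℝ)).2 t ≤ ρ₂ / c₂) ∧
        (∀ t : I01, a₁ ≤ (t : ℝ) → (t : ℝ) ≤ b₁ →
          0 ≤ (w : C(I01, ℝ) × C(I01, ℝ)).1 t ∧ (w : C(I01, ℝ) × C(I01, ℝ)).1 t ≤ ρ₁ / c₁)))) ∧
    -- (4) boundary of K_{ρ₁,ρ₂}
    (∀ w : K, w ∈ frontier KR ↔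
      ((‖(w : C(I01, ℝ) × C(I01, ℝ)).1‖ = ρ₁ ∧ ‖(w : C(I01, ℝ) × C(I01, ℝ)).2‖ ≤ ρ₂) ∨
       (‖(w : C(I01, ℝ) × C(I01, ℝ)).2‖ = ρ₂ ∧ ‖(w : C(I01, ℝ) × C(I01, ℝ)).1‖ ≤ ρ₁))) := by
  obtain ⟨hc₁0, hc₁1⟩ := hc₁
  obtain ⟨hc₂0, hc₂1⟩ := hc₂
  -- membership facts
  have hmem : ∀ w : K, c₁ * ‖(w : C(I01, ℝ) × C(I01, ℝ)).1‖ ≤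
      cmin (w : C(I01, ℝ) × C(I01, ℝ)).1 a₁ b₁ ∧
      c₂ * ‖(w : C(I01, ℝ) × C(I01, ℝ)).2‖ ≤ cmin (w : C(I01, ℝ) × C(I01, ℝ)).2 a₂ b₂ := by
    intro w
    exact (Set.ext_iff.mp hK _).mp w.2
  -- cone property
  have hcone : ∀ w ∈ K, ∀ r : ℝ, 0 ≤ r → (r • w.1, r • w.2) ∈ K := by
    intro w hw r hr
    obtain ⟨hw1, hw2⟩ := (Set.ext_iff.mp hK w).mp hw
    refine (Set.ext_iff.mp hK _).mpr ⟨?_, ?_⟩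
    · show c₁ * ‖r • w.1‖ ≤ cmin (r • w.1) a₁ b₁
      rw [norm_smul r w.1, Real.norm_eq_abs, abs_of_nonneg hr, cmin_smul w.1 hr]
      nlinarith
    · show c₂ * ‖r • w.2‖ ≤ cmin (r • w.2) a₂ b₂
      rw [norm_smul r w.2, Real.norm_eq_abs, abs_of_nonneg hr, cmin_smul w.2 hr]
      nlinarith
  -- continuity
  have hcont1 : Continuous (fun w : K => cmin (w : C(I01, ℝ) × C(I01, ℝ)).1 a₁ b₁) :=
    (cmin_lipschitz ha₁ hab₁ hb₁).continuous.comp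
      (continuous_fst.comp continuous_subtype_val)
  have hcont2 : Continuous (fun w : K => cmin (w : C(I01, ℝ) × C(I01, ℝ)).2 a₂ b₂) :=
    (cmin_lipschitz ha₂ hab₂ hb₂).continuous.comp
      (continuous_snd.comp continuous_subtype_val)
  have hcontn1 : Continuous (fun w : K => ‖(w : C(I01, ℝ) × C(I01, ℝ)).1‖) :=
    continuous_norm.comp (continuous_fst.comp continuous_subtype_val)
  have hcontn2 : Continuous (fun w : K => ‖(w : C(I01, ℝ) × C(I01, ℝ)).2‖) :=
    continuous_norm.comp (continuous_snd.comp continuous_subtype_val)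
  -- closure conditions
  have hclV := closure_scale hcone
    (F := fun u => cmin u a₁ b₁) (G := fun u => cmin u a₂ b₂)
    (fun u r hr => cmin_smul u hr) (fun u r hr => cmin_smul u hr) hρ₁ hρ₂ hVR
  have hclK := closure_scale hcone
    (F := fun u => ‖u‖) (G := fun u => ‖u‖)
    (fun u r hr => by show ‖r • u‖ = r * ‖u‖; rw [norm_smul r u, Real.norm_eq_abs, abs_of_nonneg hr])
    (fun u r hr => by show ‖r • u‖ = r * ‖u‖; rw [norm_smul r u, Real.norm_eq_abs, abs_of_nonneg hr]) hρ₁ hρ₂ hKR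
  have h2 := frontier_char hcont1 hcont2 hVR hclV
  have h4 := frontier_char hcontn1 hcontn2 hKR hclK
  refine ⟨⟨?_, ?_⟩, h2, ?_, h4⟩
  · -- KR ⊆ VR
    intro w hw
    rw [hKR] at hw
    rw [hVR]
    exact ⟨lt_of_le_of_lt (cmin_le_norm ha₁ hab₁ hb₁ _) hw.1,
      lt_of_le_of_lt (cmin_le_norm ha₂ hab₂ hb₂ _) hw.2⟩
  · -- VR ⊆ bigger set
    intro w hw
    rw [hVR] at hw
    obtain ⟨h1, h2'⟩ := hw
    obtain ⟨hw1, hw2⟩ := hmem w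
    constructor
    · rw [lt_div_iff₀ hc₁0]; nlinarith
    · rw [lt_div_iff₀ hc₂0]; nlinarith
  · -- (3)
    intro w hw
    obtain ⟨hw1, hw2⟩ := hmem w
    rcases (h2 w).mp hw with ⟨hm1, hm2⟩ | ⟨hm2, hm1⟩
    · left
      have hn1 : ‖(w : C(I01, ℝ) × C(I01, ℝ)).1‖ ≤ ρ₁ / c₁ := by
        rw [le_div_iff₀ hc₁0]; nlinarith
      have hn2 : ‖(w : C(I01, ℝ) × C(I01, ℝ)).2‖ ≤ ρ₂ / c₂ := by
        rw [le_div_iff₀ hc₂0]; nlinarith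
      refine ⟨fun t ht1 ht2 => ⟨?_, ?_⟩, fun t ht1 ht2 => ⟨?_, ?_⟩⟩
      · exact hm1 ▸ cmin_le_apply _ ht1 ht2
      · exact (apply_le_norm _ t).trans hn1
      · have := cmin_le_apply (w : C(I01, ℝ) × C(I01, ℝ)).2 ht1 ht2
        nlinarith [norm_nonneg (w : C(I01, ℝ) × C(I01, ℝ)).2]
      · exact (apply_le_norm _ t).trans hn2
    · right
      have hn1 : ‖(w : C(I01, ℝ) × C(I01, ℝ)).1‖ ≤ ρ₁ / c₁ := by
        rw [le_div_iff₀ hc₁0]; nlinarith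
      have hn2 : ‖(w : C(I01, ℝ) × C(I01, ℝ)).2‖ ≤ ρ₂ / c₂ := by
        rw [le_div_iff₀ hc₂0]; nlinarith
      refine ⟨fun t ht1 ht2 => ⟨?_, ?_⟩, fun t ht1 ht2 => ⟨?_, ?_⟩⟩
      · exact hm2 ▸ cmin_le_apply _ ht1 ht2
      · exact (apply_le_norm _ t).trans hn2
      · have := cmin_le_apply (w : C(I01, ℝ) × C(I01, ℝ)).1 ht1 ht2
        nlinarith [norm_nonneg (w : C(I01, ℝ) × C(I01, ℝ)).1]
      · exact (apply_le_norm _ t).trans hn1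
end
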